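/- arXiv:2004.05088 — 9 statements merged into one kernel-verified Lean document; each statement's English description precedes it below -/
import Mathlib

section
/- For every w > 0 that is not an integer multiple of D, the function P_W is differentiable at w and its derivative there equals f_W(w). -/
open Real MeasureTheory Filter

/-- Stationary waiting-time CDF of the M/D/1 queue (Erlang's formula),
extended by `0` on the negative reals. -/
noncomputable def PW (lam D w : ℝ) : ℝ :=
  if w < 0 then 0 else
    (1 - lam * D) * ∑ k ∈ Finset.range (⌊w / D⌋₊ + 1),
      (-(lam * (w - (k : ℝ) * D))) ^ k * Real.exp (lam * (w - (k : ℝ) * D)) /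
        (Nat.factorial k)

/-- Continuous part of the stationary waiting-time density of the M/D/1 queue. -/
noncomputable def fW (lam D w : ℝ) : ℝ :=
  (1 - lam * D) * (lam * Real.exp (lam * w) +
    ∑ k ∈ Finset.Icc 1 ⌊w / D⌋₊,
      (-lam) ^ k * (w - (k : ℝ) * D) ^ (k - 1) * Real.exp (lam * (w - (k : ℝ) * D)) *
        ((k : ℝ) + lam * (w - (k : ℝ) * D)) / (Nat.factorial k))

/-- for every `w > 0` that is not an integer multiple of `D`, the
M/D/1 waiting-time CDF `P_W` is differentiable at `w` with derivative `f_W w`. -/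
theorem md1_cdf_hasDerivAt (lam D : ℝ) (hlam : 0 < lam) (hD : 0 < D)
    (hstab : lam * D < 1) (w : ℝ) (hw : 0 < w) (hmult : ∀ n : ℕ, w ≠ (n : ℝ) * D) :
    HasDerivAt (fun x => PW lam D x) (fW lam D w) w := by
  set N := ⌊w / D⌋₊ with hN
  have hwD0 : 0 ≤ w / D := by positivity
  have hwDlt : (N : ℝ) < w / D := by
    rcases lt_or_eq_of_le (Nat.floor_le hwD0) with h | h
    · exact h
    · exact absurd (by field_simp at h; linarith [h] : w = (N : ℝ) * D) (hmult N)
  have hwDub : w / D < (N : ℝ) + 1 := Nat.lt_floor_add_one _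
  have hlo : (N : ℝ) * D < w := by
    have := (lt_div_iff₀ hD).mp hwDlt
    linarith
  have hhi : w < ((N : ℝ) + 1) * D := by
    have := (div_lt_iff₀ hD).mp hwDub
    linarith
  -- derivative of each summand
  have key : ∀ k : ℕ, HasDerivAt
      (fun x : ℝ => (-(lam * (x - (k : ℝ) * D))) ^ k * Real.exp (lam * (x - (k : ℝ) * D)) /
        (Nat.factorial k))
      ((-lam) ^ k * ((k : ℝ) * (w - (k : ℝ) * D) ^ (k - 1) * Real.exp (lam * (w - (k : ℝ) * D))
        + (w - (k : ℝ) * D) ^ k * (lam * Real.exp (lam * (w - (k : ℝ) * D)))) /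
        (Nat.factorial k)) w := by
    intro k
    have hsub : HasDerivAt (fun x : ℝ => x - (k : ℝ) * D) 1 w :=
      (hasDerivAt_id w).sub_const _
    have hpow : HasDerivAt (fun x : ℝ => (x - (k : ℝ) * D) ^ k)
        ((k : ℝ) * (w - (k : ℝ) * D) ^ (k - 1)) w := by
      simpa [Function.comp_def] using (hasDerivAt_pow k (w - (k : ℝ) * D)).comp w hsub
    have hexp : HasDerivAt (fun x : ℝ => Real.exp (lam * (x - (k : ℝ) * D)))
        (lam * Real.exp (lam * (w - (k : ℝ) * D))) w := by
      have hin : HasDerivAt (fun x : ℝ => lam * (x - (k : ℝ) * D)) lam w := by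
        simpa using hsub.const_mul lam
      have := (Real.hasDerivAt_exp (lam * (w - (k : ℝ) * D))).comp w hin
      simpa [Function.comp_def, mul_comm] using this
    have hmul := hpow.mul hexp
    have h2 := (hmul.const_mul ((-lam) ^ k)).div_const ((Nat.factorial k : ℝ))
    have hfun : (fun x : ℝ => (-(lam * (x - (k : ℝ) * D))) ^ k *
          Real.exp (lam * (x - (k : ℝ) * D)) / (Nat.factorial k))
        = fun x : ℝ => (-lam) ^ k * ((x - (k : ℝ) * D) ^ k *
          Real.exp (lam * (x - (k : ℝ) * D))) / (Nat.factorial k) := by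
      funext x
      rw [show -(lam * (x - (k : ℝ) * D)) = (-lam) * (x - (k : ℝ) * D) by ring, mul_pow]
      ring
    rw [hfun]
    exact h2
  have hsumderiv : HasDerivAt
      (fun x : ℝ => (1 - lam * D) * ∑ k ∈ Finset.range (N + 1),
        (-(lam * (x - (k : ℝ) * D))) ^ k * Real.exp (lam * (x - (k : ℝ) * D)) /
          (Nat.factorial k))
      ((1 - lam * D) * ∑ k ∈ Finset.range (N + 1),
        (-lam) ^ k * ((k : ℝ) * (w - (k : ℝ) * D) ^ (k - 1) * Real.exp (lam * (w - (k : ℝ) * D))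
          + (w - (k : ℝ) * D) ^ k * (lam * Real.exp (lam * (w - (k : ℝ) * D)))) /
          (Nat.factorial k)) w := by
    exact (HasDerivAt.fun_sum (fun k _ => key k)).const_mul _
  have hsumeq : ∑ k ∈ Finset.range (N + 1),
      (-lam) ^ k * ((k : ℝ) * (w - (k : ℝ) * D) ^ (k - 1) * Real.exp (lam * (w - (k : ℝ) * D))
        + (w - (k : ℝ) * D) ^ k * (lam * Real.exp (lam * (w - (k : ℝ) * D)))) /
        (Nat.factorial k)
      = lam * Real.exp (lam * w) + ∑ k ∈ Finset.Icc 1 N,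
        (-lam) ^ k * (w - (k : ℝ) * D) ^ (k - 1) * Real.exp (lam * (w - (k : ℝ) * D)) *
          ((k : ℝ) + lam * (w - (k : ℝ) * D)) / (Nat.factorial k) := by
    rw [Finset.sum_range_succ',
      show Finset.Icc 1 N = Finset.Ico 1 (N + 1) from (Finset.Ico_add_one_right_eq_Icc ..).symm,
      Finset.sum_Ico_eq_sum_range]
    simp only [Nat.add_sub_cancel]
    rw [add_comm]
    congr 1
    · simp
    · apply Finset.sum_congr rfl
      intro i _
      rw [Nat.add_comm 1 i, Nat.add_sub_cancel, pow_succ]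
      push_cast
      ring
  have hderiv : HasDerivAt
      (fun x : ℝ => (1 - lam * D) * ∑ k ∈ Finset.range (N + 1),
        (-(lam * (x - (k : ℝ) * D))) ^ k * Real.exp (lam * (x - (k : ℝ) * D)) /
          (Nat.factorial k)) (fW lam D w) w := by
    rw [fW, ← hsumeq]
    exact hsumderiv
  refine hderiv.congr_of_eventuallyEq ?_
  have hmemIoo : Set.Ioo ((N : ℝ) * D) (((N : ℝ) + 1) * D) ∈ nhds w :=
    Ioo_mem_nhds hlo hhi
  filter_upwards [hmemIoo] with x hx
  have hx0 : 0 < x := lt_of_le_of_lt (by positivity) hx.1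
  have hfloor : ⌊x / D⌋₊ = N := by
    rw [Nat.floor_eq_iff (by positivity)]
    constructor
    · exact (le_div_iff₀ hD).mpr (le_of_lt hx.1)
    · rw [div_lt_iff₀ hD]; push_cast; linarith [hx.2]
  rw [PW, if_neg (not_lt.mpr hx0.le), hfloor]
end

section
/- The function P_W is monotone nondecreasing on [0, ∞). -/
open Real MeasureTheory Filter

namespace MD1Aux



lemma hasDerivAt_maxpow (n : ℕ) (c y : ℝ) :
    HasDerivAt (fun w => max (w - c) 0 ^ (n + 2))
      (((n : ℝ) + 2) * max (y - c) 0 ^ (n + 1)) y := by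
  rcases lt_trichotomy y c with h | h | h
  · have hev : (fun w : ℝ => max (w - c) 0 ^ (n + 2)) =ᶠ[nhds y] fun _ => (0 : ℝ) := by
      filter_upwards [Iio_mem_nhds h] with x hx
      rw [max_eq_right (by simp only [Set.mem_Iio] at hx; linarith : x - c ≤ 0)]
      simp
    have h0 : HasDerivAt (fun _ : ℝ => (0 : ℝ)) 0 y := hasDerivAt_const y 0
    have h2 := h0.congr_of_eventuallyEq hev
    have e : ((n : ℝ) + 2) * max (y - c) 0 ^ (n + 1) = 0 := by
      rw [max_eq_right (by linarith : y - c ≤ 0)]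
      simp
    rw [e]; exact h2
  · have hval : ((n : ℝ) + 2) * max (y - c) 0 ^ (n + 1) = 0 := by
      rw [h]; simp
    rw [hval, hasDerivAt_iff_tendsto_slope]
    apply squeeze_zero_norm (a := fun x => |x - y| ^ (n + 1))
    · intro x
      rw [slope_def_field]
      have hfy : max (y - c) 0 ^ (n + 2) = 0 := by rw [h]; simp
      rw [hfy, sub_zero]
      rcases le_or_gt x c with hx | hx
      · rw [max_eq_right (by linarith), zero_pow (by omega), zero_div, norm_zero]
        positivity
      · rw [max_eq_left (by linarith : 0 ≤ x - c), h]
        have hxc : (0 : ℝ) < x - c := by linarith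
        rw [pow_succ, mul_div_cancel_right₀ _ (ne_of_gt hxc), norm_eq_abs, abs_pow]
    · have h1 : Continuous fun x : ℝ => |x - y| ^ (n + 1) := by
        exact ((continuous_id.sub continuous_const).abs).pow (n + 1)
      have h2 := h1.tendsto y
      simp only [sub_self, abs_zero, zero_pow (Nat.succ_ne_zero n)] at h2
      exact h2.mono_left nhdsWithin_le_nhds
  · have hev : (fun w : ℝ => max (w - c) 0 ^ (n + 2)) =ᶠ[nhds y]
        fun w => (w - c) ^ (n + 2) := by
      filter_upwards [Ioi_mem_nhds h] with x hx
      rw [max_eq_left (by simp only [Set.mem_Ioi] at hx; linarith : 0 ≤ x - c)]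
    have hp : HasDerivAt (fun w : ℝ => (w - c) ^ (n + 2))
        (((n : ℝ) + 2) * (y - c) ^ (n + 1)) y := by
      have := ((hasDerivAt_id y).sub_const c).fun_pow (n + 2)
      simpa using this
    have := hp.congr_of_eventuallyEq hev
    rw [max_eq_left (by linarith : 0 ≤ y - c)]
    exact this

noncomputable def u (D : ℝ) (m : ℕ) (w : ℝ) : ℝ :=
  ∑ k ∈ Finset.range (m + 1),
    (-1 : ℝ) ^ k * (m.choose k : ℝ) * max (w - (k : ℝ) * D) 0 ^ m


lemma pascal (D : ℝ) (n e : ℕ) (w : ℝ) :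
    ∑ k ∈ Finset.range (n + 2),
        (-1 : ℝ) ^ k * ((n + 1).choose k : ℝ) * max (w - (k : ℝ) * D) 0 ^ e
      = (∑ k ∈ Finset.range (n + 1),
          (-1 : ℝ) ^ k * (n.choose k : ℝ) * max (w - (k : ℝ) * D) 0 ^ e)
        - ∑ k ∈ Finset.range (n + 1),
          (-1 : ℝ) ^ k * (n.choose k : ℝ) * max (w - D - (k : ℝ) * D) 0 ^ e := by
  have hB : ∑ k ∈ Finset.range (n + 2),
      (-1 : ℝ) ^ k * (n.choose k : ℝ) * max (w - (k : ℝ) * D) 0 ^ e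
      = ∑ k ∈ Finset.range (n + 1),
        (-1 : ℝ) ^ k * (n.choose k : ℝ) * max (w - (k : ℝ) * D) 0 ^ e := by
    rw [Finset.sum_range_succ, Nat.choose_succ_self]
    simp
  rw [← hB]
  rw [Finset.sum_range_succ' (fun k => (-1 : ℝ) ^ k * ((n + 1).choose k : ℝ) * max (w - (k : ℝ) * D) 0 ^ e) (n + 1),
      Finset.sum_range_succ' (fun k => (-1 : ℝ) ^ k * (n.choose k : ℝ) * max (w - (k : ℝ) * D) 0 ^ e) (n + 1)]
  have hptw : ∀ k ∈ Finset.range (n + 1),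
      (-1 : ℝ) ^ (k + 1) * ((n + 1).choose (k + 1) : ℝ) * max (w - ((k : ℕ) + 1 : ℕ) * D) 0 ^ e
        = (-1 : ℝ) ^ (k + 1) * (n.choose (k + 1) : ℝ) * max (w - ((k : ℕ) + 1 : ℕ) * D) 0 ^ e
          - (-1 : ℝ) ^ k * (n.choose k : ℝ) * max (w - D - (k : ℝ) * D) 0 ^ e := by
    intro k _
    have hc : (((n + 1).choose (k + 1) : ℕ) : ℝ) = (n.choose k : ℝ) + (n.choose (k + 1) : ℝ) := by
      exact_mod_cast Nat.choose_succ_succ n k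
    have harg : w - (((k : ℕ) + 1 : ℕ) : ℝ) * D = w - D - (k : ℝ) * D := by
      push_cast; ring
    rw [hc, harg, pow_succ]
    ring
  rw [Finset.sum_congr rfl hptw, Finset.sum_sub_distrib]
  push_cast
  simp only [Nat.choose_zero_right, Nat.cast_one]
  ring
lemma u_monotone (D : ℝ) (hD : 0 < D) : ∀ m, Monotone (u D m)
  | 0 => by
    have h : u D 0 = fun _ => 1 := by
      funext w; simp [u]
    rw [h]; exact monotone_const
  | 1 => by
    have h : u D 1 = fun w => min (max w 0) D := by
      funext w
      simp only [u, Finset.sum_range_succ, Finset.sum_range_zero]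
      norm_num
      rcases le_total w 0 with hw | hw
      · rw [max_eq_right hw, max_eq_right (by linarith : w - D ≤ 0),
          min_eq_left (by linarith : (0:ℝ) ≤ D)]
        ring
      · rcases le_total w D with hwD | hwD
        · rw [max_eq_left hw, max_eq_right (by linarith : w - D ≤ 0),
            min_eq_left hwD]
          ring
        · rw [max_eq_left hw, max_eq_left (by linarith : (0:ℝ) ≤ w - D),
            min_eq_right hwD]
          ring
    rw [h]
    exact (monotone_id.max monotone_const).min monotone_const
  | (m + 2) => by
    have ih := u_monotone D hD (m + 1)
    have hderiv : ∀ y : ℝ, HasDerivAt (u D (m + 2))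
        (((m : ℝ) + 2) * (u D (m + 1) y - u D (m + 1) (y - D))) y := by
      intro y
      have h1 : HasDerivAt (u D (m + 2))
          (∑ k ∈ Finset.range (m + 3),
            (-1 : ℝ) ^ k * ((m + 2).choose k : ℝ) * (((m : ℝ) + 2) * max (y - (k : ℝ) * D) 0 ^ (m + 1))) y := by
        apply HasDerivAt.fun_sum
        intro k _
        exact (hasDerivAt_maxpow m ((k : ℝ) * D) y).const_mul _
      convert h1 using 1
      have : ∑ k ∈ Finset.range (m + 3),
          (-1 : ℝ) ^ k * ((m + 2).choose k : ℝ) * (((m : ℝ) + 2) * max (y - (k : ℝ) * D) 0 ^ (m + 1))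
          = ((m : ℝ) + 2) * ∑ k ∈ Finset.range (m + 3),
            (-1 : ℝ) ^ k * ((m + 2).choose k : ℝ) * max (y - (k : ℝ) * D) 0 ^ (m + 1) := by
        rw [Finset.mul_sum]
        exact Finset.sum_congr rfl fun k _ => by ring
      rw [this]
      have hp := pascal D (m + 1) (m + 1) y
      rw [show m + 1 + 2 = m + 3 from rfl, show m + 1 + 1 = m + 2 from rfl] at hp
      rw [hp]
      rfl
    apply monotone_of_deriv_nonneg
    · exact fun y => (hderiv y).differentiableAt
    · intro y
      rw [(hderiv y).deriv]
      have h1 : u D (m + 1) (y - D) ≤ u D (m + 1) y := ih (by linarith)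
      have h2 : (0 : ℝ) ≤ (m : ℝ) + 2 := by positivity
      nlinarith

/-- On `[0, ∞)`, `u` can be rewritten as a sum truncated at `⌊w/D⌋₊` without the `max`. -/
lemma u_eq (D : ℝ) (hD : 0 < D) (w : ℝ) (hw : 0 ≤ w) (m : ℕ) :
    u D m w = ∑ k ∈ Finset.range (⌊w / D⌋₊ + 1),
      (-1 : ℝ) ^ k * (m.choose k : ℝ) * (w - (k : ℝ) * D) ^ m := by
  set n := ⌊w / D⌋₊ with hn
  have hkle : ∀ k : ℕ, k ≤ n → 0 ≤ w - (k : ℝ) * D := by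
    intro k hk
    have h1 : (k : ℝ) ≤ w / D := by
      rw [hn] at hk
      exact_mod_cast (Nat.le_floor_iff (by positivity)).1 hk
    have h2 : (k : ℝ) * D ≤ (w / D) * D := by nlinarith
    rw [div_mul_cancel₀ _ (ne_of_gt hD)] at h2
    linarith
  have hkgt : ∀ k : ℕ, n < k → w - (k : ℝ) * D < 0 := by
    intro k hk
    have h1 : w / D < (k : ℝ) := by
      rw [hn] at hk
      exact_mod_cast (Nat.floor_lt (by positivity)).1 hk
    have h2 : w < (k : ℝ) * D := by
      calc w = (w / D) * D := by rw [div_mul_cancel₀ _ (ne_of_gt hD)]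
      _ < (k : ℝ) * D := by nlinarith
    linarith
  set N := max m n with hN
  have hL : u D m w = ∑ k ∈ Finset.range (N + 1),
      (-1 : ℝ) ^ k * (m.choose k : ℝ) * max (w - (k : ℝ) * D) 0 ^ m := by
    rw [u]
    apply Finset.sum_subset
    · exact Finset.range_subset_range.2 (Nat.succ_le_succ (le_max_left _ _))
    · intro k _ hk
      have : m < k := by
        simp only [Finset.mem_range] at hk
        omega
      rw [Nat.choose_eq_zero_of_lt this]
      simp
  have hR1 : ∑ k ∈ Finset.range (n + 1),
      (-1 : ℝ) ^ k * (m.choose k : ℝ) * (w - (k : ℝ) * D) ^ m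
      = ∑ k ∈ Finset.range (n + 1),
        (-1 : ℝ) ^ k * (m.choose k : ℝ) * max (w - (k : ℝ) * D) 0 ^ m :=
    Finset.sum_congr rfl fun k hk => by
      simp only [Finset.mem_range] at hk
      rw [max_eq_left (hkle k (by omega))]
  have hR2 : ∑ k ∈ Finset.range (n + 1),
      (-1 : ℝ) ^ k * (m.choose k : ℝ) * max (w - (k : ℝ) * D) 0 ^ m
      = ∑ k ∈ Finset.range (N + 1),
        (-1 : ℝ) ^ k * (m.choose k : ℝ) * max (w - (k : ℝ) * D) 0 ^ m := by
    apply Finset.sum_subset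
    · exact Finset.range_subset_range.2 (Nat.succ_le_succ (le_max_right _ _))
    · intro k hk' hk
      simp only [Finset.mem_range] at hk hk'
      have hnk : n < k := by omega
      rcases le_or_gt k m with hkm | hkm
      · rw [max_eq_right (le_of_lt (hkgt k hnk))]
        rw [zero_pow (by omega)]
        ring
      · rw [Nat.choose_eq_zero_of_lt hkm]
        simp
  rw [hL, hR1, hR2]

lemma u_nonneg (D : ℝ) (hD : 0 < D) (m : ℕ) (w : ℝ) (hmon : Monotone (u D m)) :
    0 ≤ u D m w := by
  rcases Nat.eq_zero_or_pos m with hm | hm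
  · subst hm; simp [u]
  · have ht : u D m (min w 0 - 1) = 0 := by
      rw [u]
      apply Finset.sum_eq_zero
      intro k _
      have h1 : min w 0 ≤ 0 := min_le_right _ _
      have h2 : 0 ≤ (k : ℝ) * D := by positivity
      rw [max_eq_right (by linarith), zero_pow (by omega), mul_zero]
    have h3 := hmon (show min w 0 - 1 ≤ w by linarith [min_le_left w 0])
    linarith

/-- `|u D m w| ≤ 2^m * (max w 0)^m`. -/
lemma u_abs_le (D : ℝ) (hD : 0 < D) (m : ℕ) (w : ℝ) :
    |u D m w| ≤ 2 ^ m * max w 0 ^ m := by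
  have h1 : |u D m w| ≤ ∑ k ∈ Finset.range (m + 1),
      (m.choose k : ℝ) * max w 0 ^ m := by
    refine (Finset.abs_sum_le_sum_abs _ _).trans (Finset.sum_le_sum fun k _ => ?_)
    rw [abs_mul, abs_mul, abs_pow, abs_neg, abs_one, one_pow, one_mul,
      Nat.abs_cast, abs_pow]
    have hle : |max (w - (k : ℝ) * D) 0| ≤ max w 0 := by
      rw [abs_of_nonneg (le_max_right _ _)]
      apply max_le_max _ le_rfl
      have : 0 ≤ (k : ℝ) * D := by positivity
      linarith
    exact mul_le_mul_of_nonneg_left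
      (pow_le_pow_left₀ (abs_nonneg _) hle m) (Nat.cast_nonneg _)
  calc |u D m w| ≤ ∑ k ∈ Finset.range (m + 1), (m.choose k : ℝ) * max w 0 ^ m := h1
  _ = (∑ k ∈ Finset.range (m + 1), (m.choose k : ℝ)) * max w 0 ^ m := by
      rw [Finset.sum_mul]
  _ = 2 ^ m * max w 0 ^ m := by
      congr 1
      rw [← Nat.cast_sum]
      exact_mod_cast congrArg (Nat.cast (R := ℝ)) (Nat.sum_range_choose m)

lemma summable_u (lam D : ℝ) (hlam : 0 < lam) (hD : 0 < D) (w : ℝ) :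
    Summable (fun m => lam ^ m * u D m w / m.factorial) := by
  apply Summable.of_norm_bounded (Real.summable_pow_div_factorial (2 * lam * max w 0))
  intro m
  rw [norm_div, norm_mul, norm_pow, Real.norm_eq_abs, Real.norm_eq_abs,
    Real.norm_natCast, abs_of_pos hlam]
  rw [div_le_div_iff₀ (by positivity) (by positivity)]
  have h1 : lam ^ m * |u D m w| ≤ lam ^ m * (2 ^ m * max w 0 ^ m) :=
    mul_le_mul_of_nonneg_left (u_abs_le D hD m w) (by positivity)
  calc lam ^ m * |u D m w| * (m.factorial : ℝ)
      ≤ lam ^ m * (2 ^ m * max w 0 ^ m) * (m.factorial : ℝ) := by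
        exact mul_le_mul_of_nonneg_right h1 (Nat.cast_nonneg _)
  _ = (2 * lam * max w 0) ^ m * (m.factorial : ℝ) := by
        rw [mul_pow, mul_pow]; ring

lemma choose_le_two_pow' (m k : ℕ) : (m.choose k : ℝ) ≤ 2 ^ m := by
  have h : m.choose k ≤ 2 ^ m := by
    rcases le_or_gt k m with h | h
    · have h1 : m.choose k ≤ ∑ i ∈ Finset.range (m + 1), m.choose i :=
        Finset.single_le_sum (f := fun i => m.choose i) (fun i _ => Nat.zero_le _)
          (Finset.mem_range.2 (by omega))
      rwa [Nat.sum_range_choose] at h1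
    · rw [Nat.choose_eq_zero_of_lt h]; positivity
  have h2 : ((m.choose k : ℕ) : ℝ) ≤ ((2 ^ m : ℕ) : ℝ) := by exact_mod_cast h
  rwa [Nat.cast_pow, Nat.cast_ofNat] at h2

lemma real_exp_eq_tsum (x : ℝ) :
    Real.exp x = ∑' n : ℕ, x ^ n / (n.factorial : ℝ) := by
  rw [Real.exp_eq_exp_ℝ, NormedSpace.exp_eq_tsum_div]

lemma key (lam D w : ℝ) (hlam : 0 < lam) (hD : 0 < D) (hw : 0 ≤ w) :
    PW lam D w = (1 - lam * D) * ∑' m : ℕ, lam ^ m * u D m w / (m.factorial : ℝ) := by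
  rw [PW, if_neg (not_lt.2 hw)]
  congr 1
  set n := ⌊w / D⌋₊ with hn
  set c : ℕ → ℕ → ℝ := fun k m =>
    lam ^ m * ((-1 : ℝ) ^ k * (m.choose k : ℝ) * (w - (k : ℝ) * D) ^ m) / (m.factorial : ℝ)
    with hc
  have hwk : ∀ k : ℕ, k ∈ Finset.range (n + 1) → 0 ≤ w - (k : ℝ) * D ∧ w - (k : ℝ) * D ≤ w := by
    intro k hk
    simp only [Finset.mem_range] at hk
    constructor
    · have h1 : (k : ℝ) ≤ w / D := by
        exact_mod_cast (Nat.le_floor_iff (by positivity)).1 (by omega : k ≤ n)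
      have h2 : (k : ℝ) * D ≤ (w / D) * D := by nlinarith
      rw [div_mul_cancel₀ _ (ne_of_gt hD)] at h2
      linarith
    · have : 0 ≤ (k : ℝ) * D := by positivity
      linarith
  have hsumk : ∀ k ∈ Finset.range (n + 1), Summable (c k) := by
    intro k hk
    apply Summable.of_norm_bounded (Real.summable_pow_div_factorial (2 * lam * w))
    intro m
    rw [hc]
    simp only
    rw [norm_div, norm_mul, norm_pow, Real.norm_eq_abs, Real.norm_eq_abs, Real.norm_natCast,
      abs_of_pos hlam]
    rw [div_le_div_iff₀ (by positivity) (by positivity)]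
    obtain ⟨hk1, hk2⟩ := hwk k hk
    have habs : |(-1 : ℝ) ^ k * (m.choose k : ℝ) * (w - (k : ℝ) * D) ^ m|
        ≤ 2 ^ m * w ^ m := by
      rw [abs_mul, abs_mul, abs_pow, abs_neg, abs_one, one_pow, one_mul, Nat.abs_cast, abs_pow]
      have h1 : |w - (k : ℝ) * D| ^ m ≤ w ^ m := by
        apply pow_le_pow_left₀ (abs_nonneg _)
        rw [abs_of_nonneg hk1]; exact hk2
      exact mul_le_mul (choose_le_two_pow' m k) h1 (by positivity) (by positivity)
    have h3 : lam ^ m * |(-1 : ℝ) ^ k * (m.choose k : ℝ) * (w - (k : ℝ) * D) ^ m| * (m.factorial : ℝ)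
        ≤ lam ^ m * (2 ^ m * w ^ m) * (m.factorial : ℝ) :=
      mul_le_mul_of_nonneg_right
        (mul_le_mul_of_nonneg_left habs (by positivity)) (Nat.cast_nonneg _)
    have h4 : lam ^ m * (2 ^ m * w ^ m) * (m.factorial : ℝ)
        = (2 * lam * w) ^ m * (m.factorial : ℝ) := by rw [mul_pow, mul_pow]; ring
    linarith
  have hstep1 : (∑' m : ℕ, lam ^ m * u D m w / (m.factorial : ℝ))
      = ∑' m : ℕ, ∑ k ∈ Finset.range (n + 1), c k m := by
    apply tsum_congr
    intro m
    rw [u_eq D hD w hw m, ← hn, Finset.mul_sum, Finset.sum_div]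
  rw [hstep1, Summable.tsum_finsetSum hsumk]
  apply Finset.sum_congr rfl
  intro k hk
  have hsum := hsumk k hk
  have hzero : ∀ i ∈ Finset.range k, c k i = 0 := by
    intro i hi
    simp only [Finset.mem_range] at hi
    rw [hc]
    simp only
    rw [Nat.choose_eq_zero_of_lt hi]
    simp
  have hshift := Summable.sum_add_tsum_nat_add k hsum
  rw [Finset.sum_eq_zero hzero, zero_add] at hshift
  rw [← hshift]
  have hpoint : ∀ i : ℕ, c k (i + k)
      = ((-(lam * (w - (k : ℝ) * D))) ^ k / (Nat.factorial k : ℝ))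
        * ((lam * (w - (k : ℝ) * D)) ^ i / (Nat.factorial i : ℝ)) := by
    intro i
    have hfacn : (i + k).choose k * Nat.factorial k * Nat.factorial i = Nat.factorial (i + k) := by
      have h := Nat.choose_mul_factorial_mul_factorial (Nat.le_add_left k i)
      rwa [Nat.add_sub_cancel] at h
    have hfac : (((i + k).choose k : ℕ) : ℝ) * (Nat.factorial k : ℝ) * (Nat.factorial i : ℝ)
        = (Nat.factorial (i + k) : ℝ) := by exact_mod_cast congrArg Nat.cast hfacn
    rw [hc]
    simp only
    rw [div_mul_div_comm, div_eq_div_iff (by positivity) (by positivity)]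
    have hneg : (-(lam * (w - (k : ℝ) * D))) ^ k
        = (-1 : ℝ) ^ k * lam ^ k * (w - (k : ℝ) * D) ^ k := by
      rw [show -(lam * (w - (k : ℝ) * D)) = (-1) * lam * (w - (k : ℝ) * D) from by ring,
        mul_pow, mul_pow]
    rw [hneg, ← hfac, pow_add, pow_add, mul_pow lam (w - (k : ℝ) * D) i]
    ring
  rw [tsum_congr hpoint, tsum_mul_left, ← real_exp_eq_tsum]
  ring


end MD1Aux

/-- the M/D/1 waiting-time CDF `P_W` is monotone nondecreasing on `[0, ∞)`. -/
theorem md1_cdf_monotoneOn (lam D : ℝ) (hlam : 0 < lam) (hD : 0 < D)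
    (hstab : lam * D < 1) :
    MonotoneOn (PW lam D) (Set.Ici (0 : ℝ)) := by
  intro a ha b hb hab
  simp only [Set.mem_Ici] at ha hb
  rw [MD1Aux.key lam D a hlam hD ha, MD1Aux.key lam D b hlam hD hb]
  have h1 : (0 : ℝ) ≤ 1 - lam * D := by linarith
  apply mul_le_mul_of_nonneg_left _ h1
  apply Summable.tsum_le_tsum _ (MD1Aux.summable_u lam D hlam hD a) (MD1Aux.summable_u lam D hlam hD b)
  intro m
  have h2 : MD1Aux.u D m a ≤ MD1Aux.u D m b := MD1Aux.u_monotone D hD m hab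
  have h3 : (0 : ℝ) < (m.factorial : ℝ) := by exact_mod_cast m.factorial_pos
  gcongr
end

section
/- For every M > 0 and every real β with β ≠ 0 and β ≠ −λ, one has ∫₀^M f_W(w) e^{βw} dw = (1 − λD) · ( λ(e^{(λ+β)M} − 1)/(λ+β) + Σ_{k=1}^{⌊M/D⌋} e^{βkD} · ( βλ^k/(λ+β)^{k+1} − e^{(λ+β)(M−kD)} · ( (−λ)^{k+1}(M−kD)^k/((λ+β)·k!) + Σ_{j=0}^{k−1} λ^k β (kD−M)^j/((λ+β)^{k−j+1} · j!) ) ) ). -/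
open Real MeasureTheory Filter

lemma tele_sum (lam β t a : ℝ) (ha : a ≠ 0) (m : ℕ) :
    ∑ j ∈ Finset.range (m+1),
      (a * (lam^(m+1)*β*(-t)^j/(a^(m+1-j+1) * (Nat.factorial j)))
        + lam^(m+1)*β*((j:ℝ)*(-t)^(j-1)*(-1))/(a^(m+1-j+1) * (Nat.factorial j)))
      = lam^(m+1)*β*(-t)^m/(a * (Nat.factorial m)) := by
  set F : ℕ → ℝ := fun j => Nat.casesOn j (0:ℝ)
      (fun i => lam^(m+1)*β*(-t)^i/(a^(m+1-i) * (Nat.factorial i))) with hF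
  have key : ∑ j ∈ Finset.range (m+1), (F (j+1) - F j) = F (m+1) - F 0 :=
    Finset.sum_range_sub _ (m+1)
  have hFm : F (m+1) = lam^(m+1)*β*(-t)^m/(a * (Nat.factorial m)) := by
    show lam^(m+1)*β*(-t)^m/(a^(m+1-m) * (Nat.factorial m)) = _
    rw [show m+1-m = 1 by omega, pow_one]
  have hF0 : F 0 = 0 := rfl
  rw [hFm, hF0, sub_zero] at key
  rw [← key]
  apply Finset.sum_congr rfl
  intro j hj
  simp only [Finset.mem_range] at hj
  match j with
  | 0 =>
    rw [show F (0+1) = lam^(m+1)*β*(-t)^0/(a^(m+1-0) * (Nat.factorial 0)) from rfl, hF0, sub_zero]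
    simp only [Nat.cast_zero, pow_zero, Nat.factorial_zero, Nat.cast_one, Nat.sub_zero,
      zero_mul, mul_one, zero_div, add_zero, mul_zero]
    rw [show m+1+1 = (m+1)+1 from rfl, pow_succ]
    field_simp
    ring
  | (i+1) =>
    have hi : i + 1 < m + 1 := hj
    have h2 : F (i+1) = lam^(m+1)*β*(-t)^i/(a^(m+1-i) * (Nat.factorial i)) := rfl
    rw [show F (i+1+1) = lam^(m+1)*β*(-t)^(i+1)/(a^(m+1-(i+1)) * (Nat.factorial (i+1))) from rfl, h2]
    rw [show m+1-(i+1)+1 = (m-i)+1 by omega, show m+1-(i+1) = m-i by omega,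
      show m+1-i = (m-i)+1 by omega, show (i+1)-1 = i from rfl]
    have hfac : (Nat.factorial (i+1) : ℝ) = ((i:ℝ)+1) * (Nat.factorial i) := by
      rw [Nat.factorial_succ]; push_cast; ring
    have hfi : (Nat.factorial i : ℝ) ≠ 0 := Nat.cast_ne_zero.mpr (Nat.factorial_ne_zero i)
    have hi1 : ((i:ℝ)+1) ≠ 0 := by positivity
    rw [hfac]
    rw [pow_succ]
    push_cast
    field_simp
    ring

lemma phi_deriv (lam β : ℝ) (ha : lam + β ≠ 0) (m : ℕ) (t : ℝ) :
    HasDerivAt (fun t => -(Real.exp ((lam+β)*t) *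
      ((-lam)^(m+1+1) * t^(m+1) / ((lam+β) * (Nat.factorial (m+1)))
        + ∑ j ∈ Finset.range (m+1),
            lam^(m+1)*β*(-t)^j/((lam+β)^(m+1-j+1) * (Nat.factorial j)))))
    ((-lam)^(m+1) * t^m * Real.exp ((lam+β)*t) * (((m:ℝ)+1) + lam*t) / (Nat.factorial (m+1))) t := by
  have he : HasDerivAt (fun t => Real.exp ((lam+β)*t))
      (Real.exp ((lam+β)*t) * ((lam+β)*1)) t :=
    (((hasDerivAt_id t).const_mul (lam+β))).exp
  have hP : HasDerivAt (fun t => (-lam)^(m+1+1) * t^(m+1) / ((lam+β) * (Nat.factorial (m+1))))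
      ((-lam)^(m+1+1) * (((m:ℝ)+1) * t^m) / ((lam+β) * (Nat.factorial (m+1)))) t := by
    have := ((hasDerivAt_pow (m+1) t).const_mul ((-lam)^(m+1+1))).div_const
      ((lam+β) * (Nat.factorial (m+1)))
    simpa using this
  have hS : HasDerivAt (fun t => ∑ j ∈ Finset.range (m+1),
        lam^(m+1)*β*(-t)^j/((lam+β)^(m+1-j+1) * (Nat.factorial j)))
      (∑ j ∈ Finset.range (m+1),
        lam^(m+1)*β*((j:ℝ)*(-t)^(j-1)*(-1))/((lam+β)^(m+1-j+1) * (Nat.factorial j))) t := by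
    apply HasDerivAt.fun_sum
    intro j hj
    have hneg : HasDerivAt (fun t : ℝ => (-t)^j) ((j:ℝ)*(-t)^(j-1)*(-1)) t :=
      (hasDerivAt_id t).neg.pow j
    simpa [mul_div_assoc] using (hneg.const_mul (lam^(m+1)*β)).div_const
      ((lam+β)^(m+1-j+1) * (Nat.factorial j))
  have htot := (he.mul (hP.add hS)).neg
  refine (htot.congr_deriv ?_)
  symm
  simp only [Pi.add_apply]
  have h2 : (lam+β) * (∑ j ∈ Finset.range (m+1),
        lam^(m+1)*β*(-t)^j/((lam+β)^(m+1-j+1) * (Nat.factorial j)))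
      + ∑ j ∈ Finset.range (m+1),
        lam^(m+1)*β*((j:ℝ)*(-t)^(j-1)*(-1))/((lam+β)^(m+1-j+1) * (Nat.factorial j))
      = lam^(m+1)*β*(-t)^m/((lam+β) * (Nat.factorial m)) := by
    rw [Finset.mul_sum, ← Finset.sum_add_distrib]
    exact tele_sum lam β t (lam+β) ha m
  set S := ∑ j ∈ Finset.range (m+1),
      lam^(m+1)*β*(-t)^j/((lam+β)^(m+1-j+1) * (Nat.factorial j)) with hSdef
  set S' := ∑ j ∈ Finset.range (m+1),
      lam^(m+1)*β*((j:ℝ)*(-t)^(j-1)*(-1))/((lam+β)^(m+1-j+1) * (Nat.factorial j)) with hS'def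
  have hS'eq : S' = lam^(m+1)*β*(-t)^m/((lam+β) * (Nat.factorial m)) - (lam+β) * S := by
    rw [← h2]; ring
  rw [hS'eq]
  have hfac : (Nat.factorial (m+1) : ℝ) = ((m:ℝ)+1) * (Nat.factorial m) := by
    rw [Nat.factorial_succ]; push_cast; ring
  have hfm : (Nat.factorial m : ℝ) ≠ 0 := Nat.cast_ne_zero.mpr (Nat.factorial_ne_zero m)
  have hm1 : ((m:ℝ)+1) ≠ 0 := by positivity
  rw [hfac]
  rw [show (-lam)^(m+1+1) = (-1)^m * (lam^(m+1) * lam) by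
    rw [show m+1+1 = (m+2) from rfl, pow_succ, pow_succ, neg_pow]; ring,
    show (-lam)^(m+1) = (-1)^m * lam^(m+1) * (-1) by rw [pow_succ, neg_pow]; ring,
    show (-t)^m = (-1)^m * t^m by rw [neg_pow],
    show t^(m+1) = t^m * t by rw [pow_succ]]
  field_simp
  ring

lemma piece_integral (lam β : ℝ) (ha : lam + β ≠ 0) (m : ℕ) (c M : ℝ) :
    ∫ w in c..M, (-lam)^(m+1) * (w - c)^m * Real.exp (lam*(w-c)) *
        (((m:ℝ)+1) + lam*(w-c)) / (Nat.factorial (m+1)) * Real.exp (β*w)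
    = Real.exp (β*c) * (β*lam^(m+1)/(lam+β)^(m+1+1)
        - Real.exp ((lam+β)*(M-c)) *
          ((-lam)^(m+1+1)*(M-c)^(m+1)/((lam+β)*(Nat.factorial (m+1)))
            + ∑ j ∈ Finset.range (m+1),
                lam^(m+1)*β*(c-M)^j/((lam+β)^(m+1-j+1)*(Nat.factorial j)))) := by
  set F : ℝ → ℝ := fun w => Real.exp (β*c) *
      -(Real.exp ((lam+β)*(w-c)) *
        ((-lam)^(m+1+1) * (w-c)^(m+1) / ((lam+β) * (Nat.factorial (m+1)))
          + ∑ j ∈ Finset.range (m+1),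
              lam^(m+1)*β*(-(w-c))^j/((lam+β)^(m+1-j+1) * (Nat.factorial j)))) with hFdef
  have key : ∀ w ∈ Set.uIcc c M, HasDerivAt F
      ((-lam)^(m+1) * (w - c)^m * Real.exp (lam*(w-c)) *
        (((m:ℝ)+1) + lam*(w-c)) / (Nat.factorial (m+1)) * Real.exp (β*w)) w := by
    intro w _
    have h1 := phi_deriv lam β ha m (w - c)
    have h2 : HasDerivAt (fun w : ℝ => w - c) 1 w := (hasDerivAt_id w).sub_const c
    have h3 := (h1.comp w h2).const_mul (Real.exp (β*c))
    have heq : Real.exp (β*c) *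
        ((-lam)^(m+1) * (w-c)^m * Real.exp ((lam+β)*(w-c)) * (((m:ℝ)+1) + lam*(w-c)) /
          (Nat.factorial (m+1)) * 1)
        = (-lam)^(m+1) * (w - c)^m * Real.exp (lam*(w-c)) *
            (((m:ℝ)+1) + lam*(w-c)) / (Nat.factorial (m+1)) * Real.exp (β*w) := by
      rw [show Real.exp (β*w) = Real.exp (β*c) * Real.exp (β*(w-c)) by
            rw [← Real.exp_add]; congr 1; ring,
          show Real.exp ((lam+β)*(w-c)) = Real.exp (lam*(w-c)) * Real.exp (β*(w-c)) by
            rw [← Real.exp_add]; congr 1; ring]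
      ring
    rw [← heq]
    simpa [Function.comp, hFdef] using h3
  have hint : IntervalIntegrable (fun w => (-lam)^(m+1) * (w - c)^m * Real.exp (lam*(w-c)) *
      (((m:ℝ)+1) + lam*(w-c)) / (Nat.factorial (m+1)) * Real.exp (β*w)) volume c M := by
    apply Continuous.intervalIntegrable
    fun_prop
  rw [intervalIntegral.integral_eq_sub_of_hasDerivAt key hint]
  have hFc : F c = -(Real.exp (β*c) * (lam^(m+1)*β/((lam+β)^(m+1+1)))) := by
    rw [hFdef]
    simp only [sub_self, mul_zero, Real.exp_zero, one_mul, neg_zero]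
    rw [Finset.sum_eq_single 0]
    · norm_num
    · intro j _ hj
      rw [zero_pow hj]
      ring
    · intro h; simp at h
  have hFM : F M = Real.exp (β*c) *
      -(Real.exp ((lam+β)*(M-c)) *
        ((-lam)^(m+1+1) * (M-c)^(m+1) / ((lam+β) * (Nat.factorial (m+1)))
          + ∑ j ∈ Finset.range (m+1),
              lam^(m+1)*β*(c-M)^j/((lam+β)^(m+1-j+1) * (Nat.factorial j)))) := by
    rw [hFdef]
    simp only [neg_sub]
  rw [hFM, hFc]
  ring

/-- closed form of the auxiliary function
`θ(M, β) = ∫₀^M f_W(w) e^{β w} dw` for `β ≠ 0`, `β ≠ -λ`. -/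
theorem md1_theta_formula (lam D : ℝ) (hlam : 0 < lam) (hD : 0 < D)
    (hstab : lam * D < 1) (M : ℝ) (hM : 0 < M) (β : ℝ) (hβ0 : β ≠ 0) (hβl : β ≠ -lam) :
    ∫ w in (0:ℝ)..M, fW lam D w * Real.exp (β * w) =
      (1 - lam * D) * (lam * (Real.exp ((lam + β) * M) - 1) / (lam + β) +
        ∑ k ∈ Finset.Icc 1 ⌊M / D⌋₊,
          Real.exp (β * (k : ℝ) * D) *
            (β * lam ^ k / (lam + β) ^ (k + 1) -
              Real.exp ((lam + β) * (M - (k : ℝ) * D)) *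
                ((-lam) ^ (k + 1) * (M - (k : ℝ) * D) ^ k /
                    ((lam + β) * (Nat.factorial k)) +
                  ∑ j ∈ Finset.range k,
                    lam ^ k * β * ((k : ℝ) * D - M) ^ j /
                      ((lam + β) ^ (k - j + 1) * (Nat.factorial j))))) := by
  have ha : lam + β ≠ 0 := fun h => hβl (by linarith)
  set N := ⌊M / D⌋₊ with hN
  set pf : ℕ → ℝ → ℝ := fun k w => if (k:ℝ)*D ≤ w then
      (1 - lam*D) * ((-lam)^k * (w - (k:ℝ)*D)^(k-1) * Real.exp (lam*(w - (k:ℝ)*D)) *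
        ((k:ℝ) + lam*(w - (k:ℝ)*D)) / (Nat.factorial k) * Real.exp (β*w)) else 0 with hpf
  -- pointwise identity on [0, M]
  have hpt : Set.EqOn (fun w => fW lam D w * Real.exp (β * w))
      (fun w => (1 - lam*D) * lam * Real.exp ((lam+β)*w) + ∑ k ∈ Finset.Icc 1 N, pf k w)
      (Set.uIcc (0:ℝ) M) := by
    intro w hw
    rw [Set.uIcc_of_le hM.le] at hw
    obtain ⟨hw0, hwM⟩ := hw
    have hwD0 : (0:ℝ) ≤ w / D := by positivity
    have hsub : Finset.Icc 1 ⌊w/D⌋₊ ⊆ Finset.Icc 1 N :=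
      Finset.Icc_subset_Icc_right (Nat.floor_le_floor (by gcongr))
    have hsum : ∑ k ∈ Finset.Icc 1 ⌊w/D⌋₊,
          (-lam)^k * (w - (k:ℝ)*D)^(k-1) * Real.exp (lam*(w - (k:ℝ)*D)) *
            ((k:ℝ) + lam*(w - (k:ℝ)*D)) / (Nat.factorial k)
        = ∑ k ∈ Finset.Icc 1 N, (if (k:ℝ)*D ≤ w then
            (-lam)^k * (w - (k:ℝ)*D)^(k-1) * Real.exp (lam*(w - (k:ℝ)*D)) *
              ((k:ℝ) + lam*(w - (k:ℝ)*D)) / (Nat.factorial k) else 0) := by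
      rw [← Finset.sum_subset hsub]
      · apply Finset.sum_congr rfl
        intro k hk
        rw [if_pos]
        have hk2 := (Finset.mem_Icc.mp hk).2
        have : (k:ℝ) ≤ w / D := (Nat.le_floor_iff hwD0).mp hk2
        calc (k:ℝ)*D ≤ (w/D)*D := by gcongr
          _ = w := div_mul_cancel₀ w hD.ne'
      · intro k hk hk'
        rw [if_neg]
        have hk1 := (Finset.mem_Icc.mp hk).1
        have : ⌊w/D⌋₊ < k := by
          by_contra hcon
          exact hk' (Finset.mem_Icc.mpr ⟨hk1, not_lt.mp hcon⟩)
        have : w / D < k := (Nat.floor_lt hwD0).mp this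
        have : w < (k:ℝ)*D := by
          calc w = (w/D)*D := (div_mul_cancel₀ w hD.ne').symm
            _ < (k:ℝ)*D := by gcongr
        linarith
    show fW lam D w * Real.exp (β * w) = _
    rw [fW, hsum, mul_add (1 - lam*D), add_mul, Finset.mul_sum, Finset.sum_mul]
    congr 1
    · rw [show Real.exp ((lam+β)*w) = Real.exp (lam*w) * Real.exp (β*w) by
        rw [← Real.exp_add]; congr 1; ring]
      ring
    · apply Finset.sum_congr rfl
      intro k _
      simp only [hpf]
      by_cases h : (k:ℝ)*D ≤ w
      · rw [if_pos h, if_pos h]; ring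
      · rw [if_neg h, if_neg h]; ring
  rw [intervalIntegral.integral_congr hpt]
  -- integrability
  have hbase : IntervalIntegrable (fun w => (1 - lam*D) * lam * Real.exp ((lam+β)*w))
      volume 0 M := (by fun_prop : Continuous _).intervalIntegrable 0 M
  have hpint : ∀ k, IntervalIntegrable (pf k) volume 0 M := by
    intro k
    have hind : pf k = Set.indicator (Set.Ici ((k:ℝ)*D))
        (fun w => (1 - lam*D) * ((-lam)^k * (w - (k:ℝ)*D)^(k-1) *
          Real.exp (lam*(w - (k:ℝ)*D)) * ((k:ℝ) + lam*(w - (k:ℝ)*D)) /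
            (Nat.factorial k) * Real.exp (β*w))) := by
      ext w
      rw [hpf, Set.indicator_apply]
      simp [Set.mem_Ici]
    rw [hind, intervalIntegrable_iff]
    have hcont : Continuous (fun w => (1 - lam*D) * ((-lam)^k * (w - (k:ℝ)*D)^(k-1) *
          Real.exp (lam*(w - (k:ℝ)*D)) * ((k:ℝ) + lam*(w - (k:ℝ)*D)) /
            (Nat.factorial k) * Real.exp (β*w))) := by fun_prop
    exact hcont.integrableOn_uIoc.indicator measurableSet_Ici
  have hsumint : IntervalIntegrable (fun w => ∑ k ∈ Finset.Icc 1 N, pf k w) volume 0 M := by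
    have := IntervalIntegrable.sum (μ := volume) (a := 0) (b := M) (Finset.Icc 1 N)
      (fun k _ => hpint k)
    have h2 : (∑ i ∈ Finset.Icc 1 N, pf i) = (fun w => ∑ k ∈ Finset.Icc 1 N, pf k w) := by
      ext w; simp
    rwa [h2] at this
  rw [intervalIntegral.integral_add hbase hsumint,
    intervalIntegral.integral_finset_sum (fun k _ => hpint k)]
  rw [mul_add, Finset.mul_sum]
  congr 1
  · -- base part
    have key : ∀ w ∈ Set.uIcc (0:ℝ) M, HasDerivAt
        (fun w => (1 - lam*D) * lam / (lam+β) * Real.exp ((lam+β)*w))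
        ((1 - lam*D) * lam * Real.exp ((lam+β)*w)) w := by
      intro w _
      have h := (((hasDerivAt_id w).const_mul (lam+β)).exp).const_mul
        ((1 - lam*D) * lam / (lam+β))
      refine (h.congr_deriv ?_)
      symm
      simp only [id]
      field_simp
    rw [intervalIntegral.integral_eq_sub_of_hasDerivAt key hbase]
    rw [mul_zero, Real.exp_zero]
    field_simp
  · -- sum part
    apply Finset.sum_congr rfl
    intro k hk
    obtain ⟨hk1, hkN⟩ := Finset.mem_Icc.mp hk
    obtain ⟨m, rfl⟩ : ∃ m, k = m + 1 := ⟨k - 1, by omega⟩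
    set c : ℝ := ((m+1 : ℕ) : ℝ) * D with hc
    have hc0 : 0 ≤ c := by positivity
    have hcM : c ≤ M := by
      have h1 : ((m+1 : ℕ) : ℝ) ≤ (N : ℝ) := by exact_mod_cast hkN
      have h2 : (N : ℝ) ≤ M / D := Nat.floor_le (by positivity)
      calc c ≤ (M/D) * D := by rw [hc]; gcongr; linarith
        _ = M := div_mul_cancel₀ M hD.ne'
    have hi1 : IntervalIntegrable (pf (m+1)) volume 0 c := by
      apply (hpint (m+1)).mono_set
      rw [Set.uIcc_of_le hc0, Set.uIcc_of_le hM.le]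
      exact Set.Icc_subset_Icc le_rfl hcM
    have hi2 : IntervalIntegrable (pf (m+1)) volume c M := by
      apply (hpint (m+1)).mono_set
      rw [Set.uIcc_of_le hcM, Set.uIcc_of_le hM.le]
      exact Set.Icc_subset_Icc hc0 le_rfl
    rw [← intervalIntegral.integral_add_adjacent_intervals hi1 hi2]
    have hzero : ∫ w in (0:ℝ)..c, pf (m+1) w = 0 := by
      have hae : ∀ᵐ (x:ℝ), x ≠ c := by
        have hset : {x : ℝ | ¬ x ≠ c} = {c} := by ext x; simp
        rw [MeasureTheory.ae_iff, hset]
        exact measure_singleton c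
      have : ∫ w in (0:ℝ)..c, pf (m+1) w = ∫ w in (0:ℝ)..c, (0:ℝ) := by
        apply intervalIntegral.integral_congr_ae
        filter_upwards [hae] with x hx hmem
        rw [Set.uIoc_of_le hc0] at hmem
        have hlt : x < c := lt_of_le_of_ne hmem.2 hx
        simp only [hpf, ← hc]
        rw [if_neg (not_le.mpr hlt)]
      rw [this, intervalIntegral.integral_zero]
    rw [hzero, zero_add]
    have hcongr : ∫ w in c..M, pf (m+1) w
        = ∫ w in c..M, (1-lam*D) * ((-lam)^(m+1) * (w - c)^m * Real.exp (lam*(w - c)) *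
            (((m:ℝ)+1) + lam*(w - c)) / (Nat.factorial (m+1)) * Real.exp (β*w)) := by
      apply intervalIntegral.integral_congr
      intro x hx
      rw [Set.uIcc_of_le hcM] at hx
      simp only [hpf, ← hc]
      rw [if_pos hx.1]
      have h1 : m + 1 - 1 = m := by omega
      rw [h1]
      push_cast
      ring
    rw [hcongr, intervalIntegral.integral_const_mul]
    rw [piece_integral lam β ha m c M]
    have hexp : Real.exp (β*((m+1:ℕ):ℝ)*D) = Real.exp (β*c) := by
      rw [hc, mul_assoc]
    rw [hexp]
end

section
/- For every M > 0, one has ∫₀^M f_W(w) e^{−λw} dw = (1 − λD) · ( λM + Σ_{k=1}^{⌊M/D⌋} e^{−λkD} (−λ)^k ( (M−kD)^k/k! + λ(M−kD)^{k+1}/(k+1)! ) ). -/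
open Real MeasureTheory Filter

/-- Antiderivative of `fW lam D w * exp (-lam * w)` on the interval where
`⌊w / D⌋₊ = n`. -/
noncomputable def Fa (lam D : ℝ) (n : ℕ) (w : ℝ) : ℝ :=
  (1 - lam * D) * (lam * w +
    ∑ k ∈ Finset.Icc 1 n,
      Real.exp (-lam * (k : ℝ) * D) * (-lam) ^ k *
        ((w - (k : ℝ) * D) ^ k / (Nat.factorial k) +
          lam * (w - (k : ℝ) * D) ^ (k + 1) / (Nat.factorial (k + 1))))

/-- Smooth version of the integrand on the interval where `⌊w / D⌋₊ = n`. -/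
noncomputable def ga (lam D : ℝ) (n : ℕ) (w : ℝ) : ℝ :=
  (1 - lam * D) * (lam +
    ∑ k ∈ Finset.Icc 1 n,
      Real.exp (-lam * (k : ℝ) * D) * (-lam) ^ k *
        ((w - (k : ℝ) * D) ^ (k - 1) * ((k : ℝ) + lam * (w - (k : ℝ) * D)) /
          (Nat.factorial k)))

lemma ga_cont (lam D : ℝ) (n : ℕ) : Continuous (ga lam D n) := by
  unfold ga; fun_prop

lemma fW_mul_exp (lam D : ℝ) (n : ℕ) (x : ℝ) (hx : ⌊x / D⌋₊ = n) :
    fW lam D x * Real.exp (-lam * x) = ga lam D n x := by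
  unfold fW ga
  rw [hx, mul_assoc, add_mul, Finset.sum_mul]
  congr 1
  congr 1
  · rw [mul_assoc, ← Real.exp_add, show lam * x + -lam * x = 0 by ring,
      Real.exp_zero, mul_one]
  · refine Finset.sum_congr rfl fun k hk => ?_
    rw [show -lam * (k : ℝ) * D = lam * (x - (k : ℝ) * D) + -lam * x by ring,
      Real.exp_add]
    ring

lemma hasDerivAt_Fa (lam D : ℝ) (n : ℕ) (x : ℝ) :
    HasDerivAt (Fa lam D n) (ga lam D n x) x := by
  have h1 : ∀ k ∈ Finset.Icc 1 n, HasDerivAt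
      (fun w => Real.exp (-lam * (k : ℝ) * D) * (-lam) ^ k *
        ((w - (k : ℝ) * D) ^ k / (Nat.factorial k) +
          lam * (w - (k : ℝ) * D) ^ (k + 1) / (Nat.factorial (k + 1))))
      (Real.exp (-lam * (k : ℝ) * D) * (-lam) ^ k *
        ((x - (k : ℝ) * D) ^ (k - 1) * ((k : ℝ) + lam * (x - (k : ℝ) * D)) /
          (Nat.factorial k))) x := by
    intro k hk
    obtain ⟨m, rfl⟩ : ∃ m, k = m + 1 :=
      ⟨k - 1, (Nat.succ_pred_eq_of_pos (Finset.mem_Icc.mp hk).1).symm⟩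
    set c : ℝ := ((m + 1 : ℕ) : ℝ) * D with hc
    have hbase : HasDerivAt (fun w : ℝ => w - c) 1 x := by
      simpa using (hasDerivAt_id x).sub_const c
    have h2 : HasDerivAt (fun w : ℝ => (w - c) ^ (m + 1))
        (((m + 1 : ℕ) : ℝ) * (x - c) ^ m * 1) x := by
      simpa using hbase.fun_pow (m + 1)
    have h3 : HasDerivAt (fun w : ℝ => (w - c) ^ (m + 2))
        (((m + 2 : ℕ) : ℝ) * (x - c) ^ (m + 1) * 1) x := by
      simpa using hbase.fun_pow (m + 2)
    have h4 : HasDerivAt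
        (fun w : ℝ => (w - c) ^ (m + 1) / (Nat.factorial (m + 1)) +
          lam * (w - c) ^ (m + 2) / (Nat.factorial (m + 2)))
        ((((m + 1 : ℕ) : ℝ) * (x - c) ^ m * 1) / (Nat.factorial (m + 1)) +
          lam * (((m + 2 : ℕ) : ℝ) * (x - c) ^ (m + 1) * 1) /
            (Nat.factorial (m + 2))) x :=
      (h2.div_const _).add ((h3.const_mul lam).div_const _)
    have h5 := h4.const_mul (Real.exp (-lam * ((m + 1 : ℕ) : ℝ) * D) * (-lam) ^ (m + 1))
    refine h5.congr_deriv ?_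
    have hfac2 : ((Nat.factorial (m + 2)) : ℝ) = ((m : ℝ) + 2) * (Nat.factorial (m + 1)) := by
      push_cast [Nat.factorial_succ]; ring
    have hp : (x - c) ^ (m + 1) = (x - c) ^ m * (x - c) := pow_succ _ _
    have hfpos : (0 : ℝ) < (Nat.factorial (m + 1)) := by positivity
    simp only [Nat.add_sub_cancel, mul_one]
    rw [hp, hfac2]
    push_cast
    field_simp
  have hsum := HasDerivAt.fun_sum h1
  have hlin : HasDerivAt (fun w : ℝ => lam * w) lam x := by
    simpa using (hasDerivAt_id x).const_mul lam
  have key := ((hlin.add hsum).const_mul (1 - lam * D))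
  unfold Fa ga
  exact key

lemma piece_ae (lam D : ℝ) (hD : 0 < D) (n : ℕ) (a b : ℝ)
    (ha : (n : ℝ) * D ≤ a) (hab : a ≤ b) (hb : b ≤ ((n : ℝ) + 1) * D) :
    ∀ᵐ x ∂(volume : Measure ℝ), x ∈ Set.uIoc a b →
      fW lam D x * Real.exp (-lam * x) = ga lam D n x := by
  have hne : ∀ᵐ x ∂(volume : Measure ℝ), x ≠ ((n : ℝ) + 1) * D := by
    rw [ae_iff]
    simp only [not_not, Set.setOf_eq_eq_singleton]
    exact measure_singleton _
  filter_upwards [hne] with x hx hmem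
  rw [Set.uIoc_of_le hab] at hmem
  have hxa : a < x := hmem.1
  have hxb : x ≤ b := hmem.2
  have h0x : 0 ≤ x := le_trans (by positivity) (le_trans ha hxa.le)
  have hfl : ⌊x / D⌋₊ = n := by
    rw [Nat.floor_eq_iff (by positivity)]
    constructor
    · rw [le_div_iff₀ hD]; linarith
    · rw [div_lt_iff₀ hD]
      have : x < ((n : ℝ) + 1) * D := lt_of_le_of_ne (le_trans hxb hb) hx
      linarith
  exact fW_mul_exp lam D n x hfl

lemma piece (lam D : ℝ) (hD : 0 < D) (n : ℕ) (a b : ℝ)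
    (ha : (n : ℝ) * D ≤ a) (hab : a ≤ b) (hb : b ≤ ((n : ℝ) + 1) * D) :
    IntervalIntegrable (fun w => fW lam D w * Real.exp (-lam * w)) volume a b ∧
    ∫ w in a..b, fW lam D w * Real.exp (-lam * w) = Fa lam D n b - Fa lam D n a := by
  have hae := piece_ae lam D hD n a b ha hab hb
  have hg : IntervalIntegrable (ga lam D n) volume a b :=
    (ga_cont lam D n).intervalIntegrable a b
  constructor
  · rw [intervalIntegrable_iff] at hg ⊢
    have h2 : (fun w => fW lam D w * Real.exp (-lam * w))
        =ᵐ[volume.restrict (Set.uIoc a b)] ga lam D n :=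
      (ae_restrict_iff' measurableSet_uIoc).mpr hae
    exact hg.congr h2.symm
  · rw [intervalIntegral.integral_congr_ae hae]
    exact intervalIntegral.integral_eq_sub_of_hasDerivAt
      (fun x _ => hasDerivAt_Fa lam D n x) hg

lemma Fa_succ_self (lam D : ℝ) (m : ℕ) :
    Fa lam D (m + 1) (((m : ℝ) + 1) * D) = Fa lam D m (((m : ℝ) + 1) * D) := by
  unfold Fa
  rw [Finset.sum_Icc_succ_top (by omega : 1 ≤ m + 1)]
  have h0 : ((m : ℝ) + 1) * D - ((m + 1 : ℕ) : ℝ) * D = 0 := by push_cast; ring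
  rw [h0]
  simp [zero_pow]

lemma main_ind (lam D : ℝ) (hD : 0 < D) :
    ∀ n : ℕ, ∀ M : ℝ, (n : ℝ) * D ≤ M → M ≤ ((n : ℝ) + 1) * D →
    IntervalIntegrable (fun w => fW lam D w * Real.exp (-lam * w)) volume 0 M ∧
    ∫ w in (0:ℝ)..M, fW lam D w * Real.exp (-lam * w) = Fa lam D n M := by
  intro n
  induction n with
  | zero =>
    intro M h0 h1
    have hp := piece lam D hD 0 0 M (by simp) (by simpa using h0) (by simpa using h1)
    refine ⟨hp.1, ?_⟩
    rw [hp.2]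
    simp [Fa]
  | succ m ih =>
    intro M h0 h1
    push_cast at h0 h1
    have hmD : (m : ℝ) * D ≤ ((m : ℝ) + 1) * D := by nlinarith
    obtain ⟨ihInt, ihVal⟩ := ih (((m : ℝ) + 1) * D) hmD le_rfl
    have hp := piece lam D hD (m + 1) (((m : ℝ) + 1) * D) M
      (by push_cast; exact le_rfl) h0 (by push_cast; linarith)
    refine ⟨ihInt.trans hp.1, ?_⟩
    rw [← intervalIntegral.integral_add_adjacent_intervals ihInt hp.1, ihVal, hp.2,
      Fa_succ_self]
    ring

/-- value of the auxiliary function `θ(M, β) = ∫₀^M f_W(w) e^{β w} dw`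
at `β = -λ`. -/
theorem md1_theta_at_neg_lam (lam D : ℝ) (hlam : 0 < lam) (hD : 0 < D)
    (hstab : lam * D < 1) (M : ℝ) (hM : 0 < M) :
    ∫ w in (0:ℝ)..M, fW lam D w * Real.exp (-lam * w) =
      (1 - lam * D) * (lam * M +
        ∑ k ∈ Finset.Icc 1 ⌊M / D⌋₊,
          Real.exp (-lam * (k : ℝ) * D) * (-lam) ^ k *
            ((M - (k : ℝ) * D) ^ k / (Nat.factorial k) +
              lam * (M - (k : ℝ) * D) ^ (k + 1) / (Nat.factorial (k + 1)))) := by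
  set n := ⌊M / D⌋₊ with hn
  have hle : (n : ℝ) ≤ M / D := Nat.floor_le (by positivity)
  have h0 : (n : ℝ) * D ≤ M := (le_div_iff₀ hD).mp hle
  have h1 : M ≤ ((n : ℝ) + 1) * D := by
    have h := Nat.lt_floor_add_one (M / D)
    exact le_of_lt ((div_lt_iff₀ hD).mp (by exact_mod_cast h))
  rw [(main_ind lam D hD n M h0 h1).2]
  rfl
end

section
/- For every μ > λ, the improper integral ∫₀^∞ f_W(w) e^{−μw} dw converges and equals (1 − λD) · λ(e^{μD} − 1) / ((μ − λ)e^{μD} + λ); i.e., lim_{M→∞} θ(M, −μ) = (1 − λD) λ(e^{μD} − 1)/((μ − λ)e^{μD} + λ). -/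
open Real MeasureTheory Filter

namespace MD1Aux

noncomputable def Qa (lam D : ℝ) (n : ℕ) (w : ℝ) : ℝ :=
  (1 - lam * D) * ∑ k ∈ Finset.range (n + 1),
      (-(lam * (w - (k : ℝ) * D))) ^ k * Real.exp (lam * (w - (k : ℝ) * D)) /
        (Nat.factorial k)

noncomputable def Ra (lam D : ℝ) (n : ℕ) (w : ℝ) : ℝ :=
  (1 - lam * D) * (lam * Real.exp (lam * w) +
    ∑ k ∈ Finset.Icc 1 n,
      (-lam) ^ k * (w - (k : ℝ) * D) ^ (k - 1) * Real.exp (lam * (w - (k : ℝ) * D)) *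
        ((k : ℝ) + lam * (w - (k : ℝ) * D)) / (Nat.factorial k))

variable {lam D : ℝ}

lemma floor_div_eq (hD : 0 < D) {n : ℕ} {w : ℝ} (h1 : (n : ℝ) * D ≤ w)
    (h2 : w < ((n : ℝ) + 1) * D) : ⌊w / D⌋₊ = n := by
  have hw0 : (0:ℝ) ≤ w := le_trans (by positivity) h1
  rw [Nat.floor_eq_iff (by positivity)]
  constructor
  · rw [le_div_iff₀ hD]; linarith
  · rw [div_lt_iff₀ hD]; push_cast; linarith

lemma fW_eq_Ra (hD : 0 < D) {n : ℕ} {w : ℝ} (h1 : (n : ℝ) * D ≤ w)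
    (h2 : w < ((n : ℝ) + 1) * D) : fW lam D w = Ra lam D n w := by
  unfold fW Ra
  rw [floor_div_eq hD h1 h2]

lemma PW_eq_Qa (hD : 0 < D) {n : ℕ} {w : ℝ} (h1 : (n : ℝ) * D ≤ w)
    (h2 : w ≤ ((n : ℝ) + 1) * D) : PW lam D w = Qa lam D n w := by
  have hw0 : (0:ℝ) ≤ w := le_trans (by positivity) h1
  rcases lt_or_eq_of_le h2 with h2' | h2'
  · unfold PW Qa
    rw [if_neg (not_lt.2 hw0), floor_div_eq hD h1 h2']
  · subst h2'
    unfold PW Qa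
    rw [if_neg (not_lt.2 hw0)]
    have hfl : ⌊(((n : ℝ) + 1) * D) / D⌋₊ = n + 1 := by
      apply floor_div_eq hD
      · push_cast; linarith
      · push_cast; nlinarith
    rw [hfl, Finset.sum_range_succ]
    have hzero : (-(lam * (((n : ℝ) + 1) * D - ((n + 1 : ℕ) : ℝ) * D))) ^ (n + 1) = 0 := by
      push_cast
      rw [sub_self, mul_zero, neg_zero, zero_pow (Nat.succ_ne_zero n)]
    rw [hzero]
    simp

lemma fW_eq_Ra' (hD : 0 < D) {n : ℕ} {w : ℝ} (hn : 1 ≤ n) (h1 : (n : ℝ) * D ≤ w)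
    (h2 : w ≤ ((n : ℝ) + 1) * D) : fW lam D w = Ra lam D n w := by
  rcases lt_or_eq_of_le h2 with h2' | h2'
  · exact fW_eq_Ra hD h1 h2'
  · subst h2'
    unfold fW Ra
    have hfl : ⌊(((n : ℝ) + 1) * D) / D⌋₊ = n + 1 := by
      apply floor_div_eq hD
      · push_cast; linarith [mul_pos (by exact_mod_cast Nat.cast_pos.2 (Nat.lt_of_lt_of_le Nat.zero_lt_one hn) : (0:ℝ) < n) hD]
      · push_cast; nlinarith
    rw [hfl, Finset.sum_Icc_succ_top (Nat.le_add_left 1 n)]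
    have hzero : (((n : ℝ) + 1) * D - ((n + 1 : ℕ) : ℝ) * D) ^ (n + 1 - 1) = 0 := by
      push_cast
      rw [sub_self, zero_pow]
      omega
    rw [hzero]
    simp

lemma PW_zero : PW lam D 0 = 1 - lam * D := by
  unfold PW
  rw [if_neg (lt_irrefl 0)]
  simp

lemma hasDerivAt_term (lam D : ℝ) (k : ℕ) (w : ℝ) :
    HasDerivAt (fun w : ℝ => (-(lam * (w - (k : ℝ) * D))) ^ k *
        Real.exp (lam * (w - (k : ℝ) * D)) / (Nat.factorial k))
      (((-lam) ^ k * ((k : ℝ) * (w - (k : ℝ) * D) ^ (k - 1)) *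
          Real.exp (lam * (w - (k : ℝ) * D)) +
        (-(lam * (w - (k : ℝ) * D))) ^ k *
          (Real.exp (lam * (w - (k : ℝ) * D)) * lam)) / (Nat.factorial k)) w := by
  have ht : HasDerivAt (fun w : ℝ => w - (k : ℝ) * D) 1 w :=
    (hasDerivAt_id w).sub_const _
  have hpow : HasDerivAt (fun w : ℝ => (-(lam * (w - (k : ℝ) * D))) ^ k)
      ((-lam) ^ k * ((k : ℝ) * (w - (k : ℝ) * D) ^ (k - 1))) w := by
    have h1 : (fun w : ℝ => (-(lam * (w - (k : ℝ) * D))) ^ k) =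
        fun w : ℝ => (-lam) ^ k * (w - (k : ℝ) * D) ^ k := by
      funext x; rw [← neg_mul, mul_pow]
    rw [h1]
    have h2 : HasDerivAt (fun w : ℝ => (w - (k : ℝ) * D) ^ k)
        ((k : ℝ) * (w - (k : ℝ) * D) ^ (k - 1) * 1) w := ht.pow k
    rw [mul_one] at h2
    exact h2.const_mul _
  have hexp : HasDerivAt (fun w : ℝ => Real.exp (lam * (w - (k : ℝ) * D)))
      (Real.exp (lam * (w - (k : ℝ) * D)) * lam) w := by
    have h3 : HasDerivAt (fun w : ℝ => lam * (w - (k : ℝ) * D)) (lam * 1) w :=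
      ht.const_mul lam
    rw [mul_one] at h3
    exact h3.exp
  exact (hpow.mul hexp).div_const _

lemma hasDerivAt_Qa (lam D : ℝ) (n : ℕ) (w : ℝ) :
    HasDerivAt (Qa lam D n) (Ra lam D n w) w := by
  have hsum : HasDerivAt
      (fun w : ℝ => ∑ k ∈ Finset.range (n + 1),
        (-(lam * (w - (k : ℝ) * D))) ^ k * Real.exp (lam * (w - (k : ℝ) * D)) /
          (Nat.factorial k))
      (∑ k ∈ Finset.range (n + 1),
        (((-lam) ^ k * ((k : ℝ) * (w - (k : ℝ) * D) ^ (k - 1)) *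
          Real.exp (lam * (w - (k : ℝ) * D)) +
        (-(lam * (w - (k : ℝ) * D))) ^ k *
          (Real.exp (lam * (w - (k : ℝ) * D)) * lam)) / (Nat.factorial k))) w :=
    HasDerivAt.fun_sum (fun k _ => hasDerivAt_term lam D k w)
  have h := hsum.const_mul (1 - lam * D)
  have heq : (1 - lam * D) * (∑ k ∈ Finset.range (n + 1),
        (((-lam) ^ k * ((k : ℝ) * (w - (k : ℝ) * D) ^ (k - 1)) *
          Real.exp (lam * (w - (k : ℝ) * D)) +
        (-(lam * (w - (k : ℝ) * D))) ^ k *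
          (Real.exp (lam * (w - (k : ℝ) * D)) * lam)) / (Nat.factorial k))) =
      Ra lam D n w := by
    unfold Ra
    rw [Finset.sum_range_succ']
    have hIcc : ∑ k ∈ Finset.Icc 1 n,
        (-lam) ^ k * (w - (k : ℝ) * D) ^ (k - 1) * Real.exp (lam * (w - (k : ℝ) * D)) *
          ((k : ℝ) + lam * (w - (k : ℝ) * D)) / (Nat.factorial k) =
        ∑ k ∈ Finset.range n,
        (-lam) ^ (k+1) * (w - ((k:ℝ)+1) * D) ^ k * Real.exp (lam * (w - ((k:ℝ)+1) * D)) *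
          (((k:ℝ)+1) + lam * (w - ((k:ℝ)+1) * D)) / (Nat.factorial (k+1)) := by
      rw [← Finset.Ico_add_one_right_eq_Icc, Finset.sum_Ico_eq_sum_range]
      norm_num
      apply Finset.sum_congr rfl
      intro k _
      rw [Nat.add_comm 1 k]
      push_cast [Nat.add_sub_cancel]
      ring_nf
    rw [hIcc]
    congr 1
    have h0 : ((-lam) ^ 0 * ((0:ℕ) * (w - ((0:ℕ) : ℝ) * D) ^ (0 - 1)) *
          Real.exp (lam * (w - ((0:ℕ) : ℝ) * D)) +
        (-(lam * (w - ((0:ℕ) : ℝ) * D))) ^ 0 *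
          (Real.exp (lam * (w - ((0:ℕ) : ℝ) * D)) * lam)) / (Nat.factorial 0) =
        lam * Real.exp (lam * w) := by
      norm_num
      ring
    rw [h0, add_comm]
    congr 1
    apply Finset.sum_congr rfl
    intro k _
    have hnm : (-(lam * (w - ((k:ℝ)+1) * D))) ^ (k+1) =
        (-lam) ^ (k+1) * (w - ((k:ℝ)+1) * D) ^ (k+1) := by
      rw [← neg_mul, mul_pow]
    simp only [Nat.add_sub_cancel]
    push_cast
    rw [hnm, pow_succ (w - ((k:ℝ)+1) * D) k]
    ring
  rw [heq] at h
  exact h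

lemma key_identity (hD : 0 < D) {w : ℝ} (hw : 0 ≤ w) :
    fW lam D w = lam * (PW lam D w - PW lam D (w - D)) := by
  rcases lt_or_ge w D with hwD | hwD
  · have hfl : ⌊w / D⌋₊ = 0 := by
      apply floor_div_eq hD
      · simpa using hw
      · simpa using hwD
    have hPW : PW lam D (w - D) = 0 := by
      unfold PW; rw [if_pos (by linarith)]
    rw [hPW]
    unfold fW PW
    rw [if_neg (not_lt.2 hw), hfl]
    simp [Finset.sum_range_one]
    ring
  · set n := ⌊w / D⌋₊ with hn
    have hw0 : 0 ≤ w / D := by positivity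
    have h1 : (n : ℝ) ≤ w / D := Nat.floor_le hw0
    have h2 : w / D < (n : ℝ) + 1 := Nat.lt_floor_add_one _
    have hn1 : 1 ≤ n := by
      apply Nat.le_floor
      rw [Nat.cast_one, le_div_iff₀ hD]
      linarith
    have h1' : (n : ℝ) * D ≤ w := by
      rw [← le_div_iff₀ hD]; exact h1
    have h2' : w < ((n : ℝ) + 1) * D := by
      rw [← div_lt_iff₀ hD]; exact h2
    have hcn : ((n - 1 : ℕ) : ℝ) = (n : ℝ) - 1 := by
      rw [Nat.cast_sub hn1, Nat.cast_one]
    have hfl2 : ⌊(w - D) / D⌋₊ = n - 1 := by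
      apply floor_div_eq hD
      · rw [hcn]; nlinarith
      · rw [hcn]; nlinarith
    unfold fW PW
    rw [if_neg (not_lt.2 hw), if_neg (not_lt.2 (by linarith : (0:ℝ) ≤ w - D))]
    rw [← hn, hfl2]
    have hnn : n - 1 + 1 = n := by omega
    rw [hnn]
    rw [Finset.sum_range_succ' (fun k =>
      (-(lam * (w - (k : ℝ) * D))) ^ k * Real.exp (lam * (w - (k : ℝ) * D)) /
        (Nat.factorial k)) n]
    have hshift : ∑ k ∈ Finset.range n,
        (-(lam * (w - D - (k : ℝ) * D))) ^ k * Real.exp (lam * (w - D - (k : ℝ) * D)) /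
          (Nat.factorial k) =
        ∑ k ∈ Finset.range n,
        (-(lam * (w - ((k : ℝ) + 1) * D))) ^ k * Real.exp (lam * (w - ((k : ℝ) + 1) * D)) /
          (Nat.factorial k) := by
      apply Finset.sum_congr rfl
      intro k _
      have h : w - D - (k : ℝ) * D = w - ((k : ℝ) + 1) * D := by ring
      rw [h]
    rw [hshift]
    have hIcc : ∑ k ∈ Finset.Icc 1 n,
        (-lam) ^ k * (w - (k : ℝ) * D) ^ (k - 1) * Real.exp (lam * (w - (k : ℝ) * D)) *
          ((k : ℝ) + lam * (w - (k : ℝ) * D)) / (Nat.factorial k) =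
        ∑ k ∈ Finset.range n,
        (-lam) ^ (k+1) * (w - ((k:ℝ)+1) * D) ^ k * Real.exp (lam * (w - ((k:ℝ)+1) * D)) *
          (((k:ℝ)+1) + lam * (w - ((k:ℝ)+1) * D)) / (Nat.factorial (k+1)) := by
      rw [← Finset.Ico_add_one_right_eq_Icc, Finset.sum_Ico_eq_sum_range]
      norm_num
      apply Finset.sum_congr rfl
      intro k _
      rw [Nat.add_comm 1 k]
      ring_nf
    rw [hIcc]
    have hterm : ∀ k ∈ Finset.range n,
        (-lam) ^ (k+1) * (w - ((k:ℝ)+1) * D) ^ k * Real.exp (lam * (w - ((k:ℝ)+1) * D)) *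
          (((k:ℝ)+1) + lam * (w - ((k:ℝ)+1) * D)) / (Nat.factorial (k+1)) =
        lam * ((-(lam * (w - ((k+1 : ℕ) : ℝ) * D))) ^ (k+1) *
            Real.exp (lam * (w - ((k+1 : ℕ) : ℝ) * D)) / (Nat.factorial (k+1)) -
          (-(lam * (w - ((k : ℝ) + 1) * D))) ^ k *
            Real.exp (lam * (w - ((k : ℝ) + 1) * D)) / (Nat.factorial k)) := by
      intro k _
      have hcast : ((k + 1 : ℕ) : ℝ) = (k : ℝ) + 1 := by push_cast; ring
      rw [hcast]
      set t := w - ((k : ℝ) + 1) * D with ht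
      have hnm1 : (-(lam * t)) ^ (k+1) = (-lam) ^ (k+1) * t ^ (k+1) := by
        rw [← neg_mul, mul_pow]
      have hnm2 : (-(lam * t)) ^ k = (-lam) ^ k * t ^ k := by
        rw [← neg_mul, mul_pow]
      rw [hnm1, hnm2, pow_succ t k, pow_succ (-lam) k, Nat.factorial_succ]
      have hf1 : ((Nat.factorial k : ℝ)) ≠ 0 := by
        exact_mod_cast Nat.factorial_ne_zero k
      push_cast
      field_simp
      ring
    have hc : ∑ k ∈ Finset.range n,
        (-lam) ^ (k+1) * (w - ((k:ℝ)+1) * D) ^ k * Real.exp (lam * (w - ((k:ℝ)+1) * D)) *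
          (((k:ℝ)+1) + lam * (w - ((k:ℝ)+1) * D)) / (Nat.factorial (k+1)) =
        lam * (∑ k ∈ Finset.range n,
            (-(lam * (w - ((k+1 : ℕ) : ℝ) * D))) ^ (k+1) *
              Real.exp (lam * (w - ((k+1 : ℕ) : ℝ) * D)) / (Nat.factorial (k+1)) -
          ∑ k ∈ Finset.range n,
            (-(lam * (w - ((k : ℝ) + 1) * D))) ^ k *
              Real.exp (lam * (w - ((k : ℝ) + 1) * D)) / (Nat.factorial k)) := by
      rw [Finset.sum_congr rfl hterm, ← Finset.sum_sub_distrib, Finset.mul_sum]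
    rw [hc]
    have ha0 : (-(lam * (w - ((0:ℕ) : ℝ) * D))) ^ 0 *
        Real.exp (lam * (w - ((0:ℕ) : ℝ) * D)) / ((Nat.factorial 0 : ℕ) : ℝ) =
        Real.exp (lam * w) := by
      norm_num
    rw [ha0]
    ring

lemma continuous_Ra (lam D : ℝ) (n : ℕ) : Continuous (Ra lam D n) := by
  unfold Ra; fun_prop

lemma continuous_Qa (lam D : ℝ) (n : ℕ) : Continuous (Qa lam D n) := by
  unfold Qa; fun_prop

lemma measurable_fW (lam D : ℝ) : Measurable (fW lam D) := by
  have h : fW lam D = fun w => (fun p : ℝ × ℕ => Ra lam D p.2 p.1) (w, ⌊w / D⌋₊) := rfl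
  rw [h]
  exact ((measurable_from_prod_countable_left (f := fun p : ℝ × ℕ => Ra lam D p.2 p.1)
      fun n => (continuous_Ra lam D n).measurable).comp
    (measurable_id.prodMk (Nat.measurable_floor.comp (measurable_id.div_const D))))

lemma measurable_PW (lam D : ℝ) : Measurable (PW lam D) := by
  have h : PW lam D = fun w =>
      if w < 0 then 0 else (fun p : ℝ × ℕ => Qa lam D p.2 p.1) (w, ⌊w / D⌋₊) := rfl
  rw [h]
  refine Measurable.ite ?_ measurable_const ?_
  · exact measurableSet_Iio
  · exact ((measurable_from_prod_countable_left (f := fun p : ℝ × ℕ => Qa lam D p.2 p.1)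
        fun n => (continuous_Qa lam D n).measurable).comp
      (measurable_id.prodMk (Nat.measurable_floor.comp (measurable_id.div_const D))))

lemma PW_hasDerivWithinAt (hD : 0 < D) {x : ℝ} (hx : 0 ≤ x) :
    HasDerivWithinAt (PW lam D) (fW lam D x) (Set.Ioi x) x := by
  set n := ⌊x / D⌋₊ with hn
  have hx0 : 0 ≤ x / D := by positivity
  have h1 : (n : ℝ) * D ≤ x := by rw [← le_div_iff₀ hD]; exact Nat.floor_le hx0
  have h2 : x < ((n : ℝ) + 1) * D := by rw [← div_lt_iff₀ hD]; exact Nat.lt_floor_add_one _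
  have hQ : HasDerivWithinAt (Qa lam D n) (Ra lam D n x) (Set.Ioi x) x :=
    (hasDerivAt_Qa lam D n x).hasDerivWithinAt
  have hev : PW lam D =ᶠ[nhdsWithin x (Set.Ioi x)] Qa lam D n := by
    filter_upwards [nhdsWithin_le_nhds (Iio_mem_nhds h2), self_mem_nhdsWithin] with y hy1 hy2
    exact PW_eq_Qa hD (le_trans h1 (le_of_lt hy2)) (le_of_lt hy1)
  have hx' : PW lam D x = Qa lam D n x := PW_eq_Qa hD h1 h2.le
  rw [fW_eq_Ra hD h1 h2]
  exact hQ.congr_of_eventuallyEq hev hx'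

lemma fW_intInt_piece (hD : 0 < D) {n : ℕ} {a b : ℝ} (h1 : (n : ℝ) * D ≤ a) (hab : a ≤ b)
    (h2 : b ≤ ((n : ℝ) + 1) * D) : IntervalIntegrable (fW lam D) volume a b := by
  rw [intervalIntegrable_iff_integrableOn_Ioc_of_le hab]
  have hcont : IntegrableOn (Ra lam D n) (Set.Ioc a b) volume :=
    (continuous_Ra lam D n).integrableOn_Ioc
  apply hcont.congr
  rw [Filter.EventuallyEq, ae_restrict_iff' measurableSet_Ioc]
  refine ae_iff.2 (measure_mono_null ?_ (measure_singleton (((n : ℝ) + 1) * D)))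
  intro x hx
  simp only [Set.mem_setOf_eq] at hx
  push_neg at hx
  obtain ⟨hmem, hne⟩ := hx
  simp only [Set.mem_singleton_iff]
  by_contra hxx
  exact hne (fW_eq_Ra hD (le_trans h1 hmem.1.le)
    (lt_of_le_of_ne (hmem.2.trans h2) hxx)).symm

lemma ftc_piece (hD : 0 < D) {n : ℕ} {a b : ℝ} (h1 : (n : ℝ) * D ≤ a) (hab : a ≤ b)
    (h2 : b ≤ ((n : ℝ) + 1) * D) :
    ∫ x in a..b, fW lam D x = PW lam D b - PW lam D a := by
  apply intervalIntegral.integral_eq_sub_of_hasDeriv_right_of_le hab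
  · have heq : Set.EqOn (PW lam D) (Qa lam D n) (Set.Icc a b) := fun x hx =>
      PW_eq_Qa hD (le_trans h1 hx.1) (le_trans hx.2 h2)
    exact ((continuous_Qa lam D n).continuousOn).congr heq
  · intro x hx
    have hx0 : (0 : ℝ) ≤ x :=
      le_trans (le_trans (by positivity) h1) hx.1.le
    exact PW_hasDerivWithinAt hD hx0
  · exact fW_intInt_piece hD h1 hab h2

lemma cumulative (hD : 0 < D) : ∀ n : ℕ, ∀ b : ℝ, (n : ℝ) * D ≤ b → b ≤ ((n : ℝ) + 1) * D →
    IntervalIntegrable (fW lam D) volume 0 b ∧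
      ∫ x in (0:ℝ)..b, fW lam D x = PW lam D b - PW lam D 0 := by
  intro n
  induction n with
  | zero =>
    intro b hb1 hb2
    have hb1' : (0:ℝ) ≤ b := by simpa using hb1
    have hb2' : b ≤ ((0:ℕ):ℝ) * D + D := by push_cast at hb2 ⊢; linarith
    refine ⟨fW_intInt_piece (n := 0) hD (by norm_num) hb1' (by push_cast at hb2 ⊢; linarith),
      ftc_piece (n := 0) hD (by norm_num) hb1' (by push_cast at hb2 ⊢; linarith)⟩
  | succ m ih =>
    intro b hb1 hb2
    have hm : (m : ℝ) * D ≤ ((m : ℝ) + 1) * D := by nlinarith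
    have base := ih (((m : ℝ) + 1) * D) hm le_rfl
    have hb1' : ((m : ℝ) + 1) * D ≤ b := by push_cast at hb1; linarith
    have hb2' : b ≤ (((m : ℝ) + 1) + 1) * D := by push_cast at hb2; linarith
    have piece_int : IntervalIntegrable (fW lam D) volume (((m : ℝ) + 1) * D) b :=
      fW_intInt_piece (n := m + 1) hD (by push_cast; linarith) hb1' (by push_cast; linarith)
    have piece_eq : ∫ x in (((m : ℝ) + 1) * D)..b, fW lam D x =
        PW lam D b - PW lam D (((m : ℝ) + 1) * D) :=
      ftc_piece (n := m + 1) hD (by push_cast; linarith) hb1' (by push_cast; linarith)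
    refine ⟨base.1.trans piece_int, ?_⟩
    rw [← intervalIntegral.integral_add_adjacent_intervals base.1 piece_int, base.2, piece_eq]
    ring

lemma integ_f (hD : 0 < D) {b : ℝ} (hb : 0 ≤ b) :
    IntervalIntegrable (fW lam D) volume 0 b ∧
      ∫ x in (0:ℝ)..b, fW lam D x = PW lam D b - PW lam D 0 := by
  set n := ⌊b / D⌋₊ with hn
  have hb0 : 0 ≤ b / D := by positivity
  have h1 : (n : ℝ) * D ≤ b := by rw [← le_div_iff₀ hD]; exact Nat.floor_le hb0
  have h2 : b ≤ ((n : ℝ) + 1) * D := by rw [← div_le_iff₀ hD]; exact (Nat.lt_floor_add_one _).le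
  exact cumulative hD n b h1 h2

lemma conv_formula (hD : 0 < D) {w : ℝ} (hw : D ≤ w) :
    fW lam D w = lam * ∫ x in (w - D)..w, fW lam D x := by
  have hw0 : (0:ℝ) ≤ w := le_trans hD.le hw
  have hwD0 : (0:ℝ) ≤ w - D := by linarith
  have e1 := integ_f (lam := lam) hD hw0
  have e2 := integ_f (lam := lam) hD hwD0
  rw [key_identity hD hw0, ← intervalIntegral.integral_interval_sub_left e1.1 e2.1, e1.2, e2.2]
  ring


lemma fW_at_D (hD : 0 < D) : fW lam D D = (1 - lam * D) * (lam * Real.exp (lam * D) - lam) := by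
  have h : fW lam D D = Ra lam D 1 D := by
    apply fW_eq_Ra' hD le_rfl <;> push_cast <;> nlinarith
  rw [h]
  unfold Ra
  rw [Finset.Icc_self, Finset.sum_singleton]
  norm_num
  left; ring

lemma fW_bound (hlam : 0 < lam) (hD : 0 < D) (hstab : lam * D < 1) :
    ∀ w : ℝ, 0 ≤ w → |fW lam D w| ≤ (1 - lam * D) * lam * Real.exp (lam * D) := by
  set K := (1 - lam * D) * lam * Real.exp (lam * D) with hK
  have hρ : 0 < 1 - lam * D := by linarith
  have hKpos : 0 < K := by positivity
  have base : ∀ w : ℝ, 0 ≤ w → w ≤ D → |fW lam D w| ≤ K := by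
    intro w hw0 hwD
    rcases lt_or_eq_of_le hwD with hlt | heq
    · have h : fW lam D w = Ra lam D 0 w := by
        apply fW_eq_Ra hD <;> push_cast <;> linarith
      rw [h]
      unfold Ra
      simp only [Finset.Icc_self, Finset.Icc_eq_empty_of_lt Nat.zero_lt_one,
        Finset.sum_empty, add_zero]
      rw [abs_of_nonneg (by positivity)]
      have hexp : Real.exp (lam * w) ≤ Real.exp (lam * D) :=
        Real.exp_le_exp.2 (by nlinarith)
      rw [hK]
      nlinarith [Real.exp_pos (lam * w)]
    · subst heq
      rw [fW_at_D hD]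
      have h1 : (1:ℝ) ≤ Real.exp (lam * w) := by
        rw [← Real.exp_zero]
        exact Real.exp_le_exp.2 (by positivity)
      rw [abs_of_nonneg (by nlinarith)]
      rw [hK]
      nlinarith
  have main : ∀ n : ℕ, ∀ w : ℝ, 0 ≤ w → w ≤ ((n : ℝ) + 1) * D → |fW lam D w| ≤ K := by
    intro n
    induction n with
    | zero =>
      intro w hw0 hw2
      exact base w hw0 (by push_cast at hw2; linarith)
    | succ m ih =>
      intro w hw0 hw2
      rcases le_or_gt w (((m : ℝ) + 1) * D) with h | h
      · exact ih w hw0 h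
      · have hw2' : w ≤ ((m : ℝ) + 2) * D := by push_cast at hw2; linarith
        set J := Set.Icc (((m : ℝ) + 1) * D) (((m : ℝ) + 2) * D) with hJ
        have hJne : J.Nonempty := ⟨((m : ℝ) + 1) * D, by constructor <;> nlinarith⟩
        obtain ⟨c, hcJ, hc⟩ := isCompact_Icc.exists_isMaxOn hJne
          ((continuous_Ra lam D (m + 1)).abs.continuousOn)
        set B := |Ra lam D (m + 1) c| with hB
        have hfRa : ∀ y ∈ J, fW lam D y = Ra lam D (m + 1) y := by
          intro y hy
          apply fW_eq_Ra' hD (by omega)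
          · push_cast; exact hy.1
          · push_cast; push_cast at hy; linarith [hy.2]
        have hmD : (0:ℝ) ≤ (m : ℝ) * D := by positivity
        have hDc : D ≤ c := by nlinarith [hcJ.1]
        have hc0 : (0:ℝ) ≤ c := le_trans hD.le hDc
        have hconv := conv_formula (lam := lam) hD hDc
        have h1m : (m : ℝ) * D ≤ c - D := by nlinarith [hcJ.1]
        have h2m : c - D ≤ ((m : ℝ) + 1) * D := by nlinarith [hcJ.2]
        have int1 : IntervalIntegrable (fW lam D) volume (c - D) (((m : ℝ) + 1) * D) :=
          fW_intInt_piece (n := m) hD h1m h2m le_rfl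
        have int2 : IntervalIntegrable (fW lam D) volume (((m : ℝ) + 1) * D) c :=
          fW_intInt_piece (n := m + 1) hD (by push_cast; linarith) hcJ.1
            (by push_cast; linarith [hcJ.2])
        have hs1 : ‖∫ x in (c - D)..(((m : ℝ) + 1) * D), fW lam D x‖ ≤
            K * |(((m : ℝ) + 1) * D) - (c - D)| := by
          apply intervalIntegral.norm_integral_le_of_norm_le_const
          intro x hx
          rw [Set.uIoc_of_le h2m] at hx
          rw [Real.norm_eq_abs]
          exact ih x (le_trans (by linarith : (0:ℝ) ≤ c - D) hx.1.le) hx.2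
        have hs2 : ‖∫ x in (((m : ℝ) + 1) * D)..c, fW lam D x‖ ≤ B * |c - ((m : ℝ) + 1) * D| := by
          apply intervalIntegral.norm_integral_le_of_norm_le_const
          intro x hx
          rw [Set.uIoc_of_le hcJ.1] at hx
          have hxJ : x ∈ J := ⟨hx.1.le, le_trans hx.2 hcJ.2⟩
          rw [Real.norm_eq_abs, hfRa x hxJ]
          exact hc hxJ
        have hint : ∫ x in (c - D)..c, fW lam D x =
            (∫ x in (c - D)..(((m : ℝ) + 1) * D), fW lam D x) +
              ∫ x in (((m : ℝ) + 1) * D)..c, fW lam D x :=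
          (intervalIntegral.integral_add_adjacent_intervals int1 int2).symm
        have habs1 : |(((m : ℝ) + 1) * D) - (c - D)| = ((m : ℝ) + 1) * D - (c - D) :=
          abs_of_nonneg (by linarith)
        have habs2 : |c - ((m : ℝ) + 1) * D| = c - ((m : ℝ) + 1) * D :=
          abs_of_nonneg (by linarith [hcJ.1])
        have hBbound : B ≤ K := by
          by_contra hKB
          push_neg at hKB
          have hfc : |fW lam D c| = B := by rw [hfRa c hcJ]
        -- |fW c| ≤ lam * (K * (D - u) + B * u) where u = c - (m+1)D
          have hineq : |fW lam D c| ≤ lam * (K * ((((m : ℝ) + 1) * D) - (c - D)) +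
              B * (c - ((m : ℝ) + 1) * D)) := by
            rw [hconv, abs_mul, abs_of_pos hlam, hint]
            have htri := norm_add_le (∫ x in (c - D)..(((m : ℝ) + 1) * D), fW lam D x)
              (∫ x in (((m : ℝ) + 1) * D)..c, fW lam D x)
            rw [habs1] at hs1
            rw [habs2] at hs2
            have : |(∫ x in (c - D)..(((m : ℝ) + 1) * D), fW lam D x) +
                ∫ x in (((m : ℝ) + 1) * D)..c, fW lam D x| ≤
                K * ((((m : ℝ) + 1) * D) - (c - D)) + B * (c - ((m : ℝ) + 1) * D) := by
              calc |(∫ x in (c - D)..(((m : ℝ) + 1) * D), fW lam D x) +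
                  ∫ x in (((m : ℝ) + 1) * D)..c, fW lam D x| ≤
                  ‖∫ x in (c - D)..(((m : ℝ) + 1) * D), fW lam D x‖ +
                  ‖∫ x in (((m : ℝ) + 1) * D)..c, fW lam D x‖ := htri
                _ ≤ _ := add_le_add hs1 hs2
            exact mul_le_mul_of_nonneg_left this hlam.le
          rw [hfc] at hineq
          have hu1 : (0:ℝ) ≤ c - ((m : ℝ) + 1) * D := by linarith [hcJ.1]
          have hu2 : (((m : ℝ) + 1) * D) - (c - D) = D - (c - ((m : ℝ) + 1) * D) := by ring
          have hBpos : 0 < B := lt_trans hKpos hKB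
          nlinarith [mul_le_mul_of_nonneg_right hKB.le
            (by linarith [h2m] : (0:ℝ) ≤ (((m : ℝ) + 1) * D) - (c - D)),
            mul_pos hlam hBpos]
        have hwJ : w ∈ J := ⟨h.le, hw2'⟩
        calc |fW lam D w| = |Ra lam D (m + 1) w| := by rw [hfRa w hwJ]
          _ ≤ B := hc hwJ
          _ ≤ K := hBbound
  intro w hw0
  set n := ⌊w / D⌋₊ with hn
  have h2 : w ≤ ((n : ℝ) + 1) * D := by
    rw [← div_le_iff₀ hD]; exact (Nat.lt_floor_add_one _).le
  exact main n w hw0 h2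


end MD1Aux

/-- for every `μ > λ`, the improper integral `∫₀^∞ f_W(w) e^{-μ w} dw`
converges and equals `(1 - λD) λ (e^{μD} - 1) / ((μ - λ) e^{μD} + λ)`;
i.e. `lim_{M → ∞} θ(M, -μ)` equals that value. -/
theorem md1_theta_limit (lam D : ℝ) (hlam : 0 < lam) (hD : 0 < D)
    (hstab : lam * D < 1) (μ : ℝ) (hμ : lam < μ) :
    MeasureTheory.IntegrableOn (fun w => fW lam D w * Real.exp (-μ * w)) (Set.Ioi 0) ∧
    Filter.Tendsto (fun M => ∫ w in (0:ℝ)..M, fW lam D w * Real.exp (-μ * w))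
      Filter.atTop
      (nhds ((1 - lam * D) * lam * (Real.exp (μ * D) - 1) /
        ((μ - lam) * Real.exp (μ * D) + lam))) := by
  have hρ : 0 < 1 - lam * D := by linarith
  have hμ0 : 0 < μ := lt_trans hlam hμ
  set K := (1 - lam * D) * lam * Real.exp (lam * D) with hK
  have hKpos : 0 < K := by positivity
  have hbound := MD1Aux.fW_bound hlam hD hstab
  have hfm : Measurable (fun w => fW lam D w * Real.exp (-μ * w)) :=
    (MD1Aux.measurable_fW lam D).mul (by fun_prop)
  -- integrability of the main integrand
  have hgint : MeasureTheory.IntegrableOn (fun w => fW lam D w * Real.exp (-μ * w))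
      (Set.Ioi 0) := by
    apply MeasureTheory.Integrable.mono ((exp_neg_integrableOn_Ioi 0 hμ0).const_mul K)
      hfm.aestronglyMeasurable
    rw [MeasureTheory.ae_restrict_iff' measurableSet_Ioi]
    refine MeasureTheory.ae_of_all _ fun x hx => ?_
    rw [Real.norm_eq_abs, Real.norm_eq_abs, abs_mul, Real.abs_exp, abs_mul, Real.abs_exp,
      abs_of_pos hKpos]
    exact mul_le_mul_of_nonneg_right (hbound x (le_of_lt hx)) (Real.exp_pos _).le
  refine ⟨hgint, ?_⟩
  -- linear bound on PW
  have hlinb : ∀ w : ℝ, 0 ≤ w → |PW lam D w| ≤ (1 - lam * D) + K * w := by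
    intro w hw
    have h := (MD1Aux.integ_f (lam := lam) hD hw).2
    rw [MD1Aux.PW_zero] at h
    have hib : ‖∫ x in (0:ℝ)..w, fW lam D x‖ ≤ K * |w - 0| := by
      apply intervalIntegral.norm_integral_le_of_norm_le_const
      intro x hx
      rw [Set.uIoc_of_le hw] at hx
      rw [Real.norm_eq_abs]
      exact hbound x hx.1.le
    rw [Real.norm_eq_abs, abs_of_nonneg (by linarith : (0:ℝ) ≤ w - 0)] at hib
    have hPWw : PW lam D w = (1 - lam * D) + ∫ x in (0:ℝ)..w, fW lam D x := by linarith
    rw [hPWw]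
    calc |(1 - lam * D) + ∫ x in (0:ℝ)..w, fW lam D x| ≤
        |1 - lam * D| + |∫ x in (0:ℝ)..w, fW lam D x| := abs_add_le _ _
      _ ≤ (1 - lam * D) + K * w := by
          rw [abs_of_pos hρ]
          have : K * (w - 0) = K * w := by ring
          rw [this] at hib
          linarith
  set C := (1 - lam * D) + 2 * K / μ with hC
  have hCpos : 0 < C := by positivity
  have hCexp : ∀ w : ℝ, 0 ≤ w → (1 - lam * D) + K * w ≤ C * Real.exp (μ / 2 * w) := by
    intro w hw
    have e1 : μ / 2 * w ≤ Real.exp (μ / 2 * w) := by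
      linarith [Real.add_one_le_exp (μ / 2 * w)]
    have e2 : (1 : ℝ) ≤ Real.exp (μ / 2 * w) := Real.one_le_exp (by positivity)
    rw [hC]
    have h2K : 2 * K / μ * (μ / 2 * w) = K * w := by field_simp
    nlinarith [mul_le_mul_of_nonneg_left e1 (by positivity : (0:ℝ) ≤ 2 * K / μ)]
  have hprod : ∀ w : ℝ, Real.exp (μ / 2 * w) * Real.exp (-μ * w) = Real.exp (-(μ / 2) * w) := by
    intro w
    rw [← Real.exp_add]
    congr 1
    ring
  have hdom : ∀ w : ℝ, 0 ≤ w → |PW lam D w * Real.exp (-μ * w)| ≤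
      C * Real.exp (-(μ / 2) * w) := by
    intro w hw
    rw [abs_mul, Real.abs_exp]
    calc |PW lam D w| * Real.exp (-μ * w) ≤
        (C * Real.exp (μ / 2 * w)) * Real.exp (-μ * w) :=
          mul_le_mul_of_nonneg_right ((hlinb w hw).trans (hCexp w hw)) (Real.exp_pos _).le
      _ = C * Real.exp (-(μ / 2) * w) := by rw [mul_assoc, hprod]
  have hdom' : ∀ w : ℝ, 0 ≤ w → |PW lam D (w - D) * Real.exp (-μ * w)| ≤
      C * Real.exp (-(μ / 2) * w) := by
    intro w hw
    rcases lt_or_ge (w - D) 0 with hwD | hwD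
    · have : PW lam D (w - D) = 0 := by unfold PW; rw [if_pos hwD]
      rw [this, zero_mul, abs_zero]
      positivity
    · rw [abs_mul, Real.abs_exp]
      have hb : |PW lam D (w - D)| ≤ (1 - lam * D) + K * w := by
        calc |PW lam D (w - D)| ≤ (1 - lam * D) + K * (w - D) := hlinb _ hwD
          _ ≤ (1 - lam * D) + K * w := by nlinarith
      calc |PW lam D (w - D)| * Real.exp (-μ * w) ≤
          (C * Real.exp (μ / 2 * w)) * Real.exp (-μ * w) :=
            mul_le_mul_of_nonneg_right (hb.trans (hCexp w hw)) (Real.exp_pos _).le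
        _ = C * Real.exp (-(μ / 2) * w) := by rw [mul_assoc, hprod]
  have hdomint : MeasureTheory.Integrable (fun w => C * Real.exp (-(μ / 2) * w))
      (MeasureTheory.volume.restrict (Set.Ioi 0)) :=
    (exp_neg_integrableOn_Ioi 0 (by positivity : (0:ℝ) < μ / 2)).const_mul C
  have hPWe_int : MeasureTheory.IntegrableOn (fun w => PW lam D w * Real.exp (-μ * w))
      (Set.Ioi 0) := by
    apply MeasureTheory.Integrable.mono hdomint
      (((MD1Aux.measurable_PW lam D).mul (by fun_prop)).aestronglyMeasurable)
    rw [MeasureTheory.ae_restrict_iff' measurableSet_Ioi]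
    refine MeasureTheory.ae_of_all _ fun x hx => ?_
    rw [Real.norm_eq_abs, Real.norm_eq_abs, abs_of_pos (by positivity : 0 < C * Real.exp (-(μ / 2) * x))]
    exact hdom x (le_of_lt hx)
  have hPWe_int' : MeasureTheory.IntegrableOn (fun w => PW lam D (w - D) * Real.exp (-μ * w))
      (Set.Ioi 0) := by
    apply MeasureTheory.Integrable.mono hdomint
      ((((MD1Aux.measurable_PW lam D).comp (measurable_id.sub_const D)).mul
        (by fun_prop : Measurable fun w : ℝ => Real.exp (-μ * w))).aestronglyMeasurable)
    rw [MeasureTheory.ae_restrict_iff' measurableSet_Ioi]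
    refine MeasureTheory.ae_of_all _ fun x hx => ?_
    rw [Real.norm_eq_abs, Real.norm_eq_abs, abs_of_pos (by positivity : 0 < C * Real.exp (-(μ / 2) * x))]
    exact hdom' x (le_of_lt hx)
  set I := ∫ w in Set.Ioi (0:ℝ), PW lam D w * Real.exp (-μ * w) with hI
  set Jv := ∫ w in Set.Ioi (0:ℝ), fW lam D w * Real.exp (-μ * w) with hJv
  -- Equation 1
  have hEq1 : Jv = lam * (I - Real.exp (-μ * D) * I) := by
    have hstep : Set.EqOn (fun w => fW lam D w * Real.exp (-μ * w))
        (fun w => lam * (PW lam D w * Real.exp (-μ * w) -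
          PW lam D (w - D) * Real.exp (-μ * w))) (Set.Ioi 0) := by
      intro w hw
      simp only
      rw [MD1Aux.key_identity hD (le_of_lt hw)]
      ring
    rw [hJv, MeasureTheory.setIntegral_congr_fun measurableSet_Ioi hstep,
      MeasureTheory.integral_const_mul,
      MeasureTheory.integral_sub hPWe_int hPWe_int']
    congr 1
    rw [← hI]
    congr 1
    -- shift identity
    have hs1 : Set.EqOn (fun w => PW lam D (w - D) * Real.exp (-μ * w))
        (fun w => Real.exp (-μ * D) * (PW lam D (w - D) * Real.exp (-μ * (w - D))))
        (Set.Ioi 0) := by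
      intro w _
      simp only
      have hx : Real.exp (-μ * D) * Real.exp (-μ * (w - D)) = Real.exp (-μ * w) := by
        rw [← Real.exp_add]; congr 1; ring
      rw [← hx]; ring
    rw [MeasureTheory.setIntegral_congr_fun measurableSet_Ioi hs1,
      MeasureTheory.integral_const_mul]
    congr 1
    -- translation
    have hTrans : ∫ w in Set.Ioi (0:ℝ), PW lam D (w - D) * Real.exp (-μ * (w - D)) =
        ∫ u in Set.Ioi (-D), PW lam D u * Real.exp (-μ * u) := by
      rw [← MeasureTheory.integral_indicator measurableSet_Ioi,
        ← MeasureTheory.integral_indicator measurableSet_Ioi]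
      have hind : (Set.indicator (Set.Ioi (0:ℝ))
            (fun w => PW lam D (w - D) * Real.exp (-μ * (w - D)))) =
          fun w => (Set.indicator (Set.Ioi (-D))
            (fun u => PW lam D u * Real.exp (-μ * u))) (w - D) := by
        funext w
        by_cases hw : 0 < w
        · rw [Set.indicator_of_mem (Set.mem_Ioi.2 hw),
            Set.indicator_of_mem (Set.mem_Ioi.2 (by linarith : -D < w - D))]
        · rw [Set.indicator_of_notMem (by simpa using hw),
            Set.indicator_of_notMem (by
              simp only [Set.mem_Ioi, not_lt]
              linarith [not_lt.1 hw])]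
      rw [hind]
      exact MeasureTheory.integral_sub_right_eq_self
        (fun w => (Set.indicator (Set.Ioi (-D)) (fun u => PW lam D u * Real.exp (-μ * u))) w) D
    rw [hTrans]
    -- cut the negative part
    have hae : (fun u => PW lam D u * Real.exp (-μ * u)) =ᵐ[MeasureTheory.volume.restrict (Set.Ioi (-D))]
        (Set.indicator (Set.Ioi (0:ℝ)) (fun u => PW lam D u * Real.exp (-μ * u))) := by
      rw [Filter.EventuallyEq, MeasureTheory.ae_restrict_iff' measurableSet_Ioi]
      refine MeasureTheory.ae_iff.2 (MeasureTheory.measure_mono_null ?_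
        (MeasureTheory.measure_singleton (0:ℝ)))
      intro x hx
      simp only [Set.mem_setOf_eq] at hx
      push_neg at hx
      obtain ⟨_, hne⟩ := hx
      simp only [Set.mem_singleton_iff]
      by_contra hxx
      apply hne
      rcases lt_or_gt_of_ne hxx with hlt | hgt
      · have hPW0 : PW lam D x = 0 := by unfold PW; rw [if_pos hlt]
        rw [Set.indicator_of_notMem (by simpa using hlt.le : x ∉ Set.Ioi (0:ℝ)), hPW0, zero_mul]
      · rw [Set.indicator_of_mem (by simpa using hgt : x ∈ Set.Ioi (0:ℝ))]
    rw [MeasureTheory.integral_congr_ae hae,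
      MeasureTheory.setIntegral_indicator measurableSet_Ioi]
    have : Set.Ioi (-D) ∩ Set.Ioi (0:ℝ) = Set.Ioi (0:ℝ) := by
      rw [Set.Ioi_inter_Ioi, sup_eq_right.mpr (by linarith : -D ≤ (0:ℝ))]
    rw [this]
  -- interval integrabilities
  have hAint : ∀ M : ℝ, 0 ≤ M →
      IntervalIntegrable (fun x => fW lam D x * Real.exp (-μ * x)) MeasureTheory.volume 0 M :=
    fun M hM => (MD1Aux.integ_f (lam := lam) hD hM).1.mul_continuousOn (Continuous.continuousOn (by fun_prop))
  have hPWcontM : ∀ M : ℝ, 0 ≤ M → ContinuousOn (PW lam D) (Set.Icc 0 M) := by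
    intro M hM
    have heqon : Set.EqOn (PW lam D)
        (fun w => (1 - lam * D) + ∫ x in (0:ℝ)..w, fW lam D x) (Set.Icc 0 M) := by
      intro w hw
      have h := (MD1Aux.integ_f (lam := lam) hD hw.1).2
      rw [MD1Aux.PW_zero] at h
      simp only
      linarith
    apply ContinuousOn.congr ?_ heqon
    apply ContinuousOn.add continuousOn_const
    have hio : MeasureTheory.IntegrableOn (fW lam D) (Set.uIcc 0 M) MeasureTheory.volume := by
      rw [Set.uIcc_of_le hM, integrableOn_Icc_iff_integrableOn_Ioc]
      exact (intervalIntegrable_iff_integrableOn_Ioc_of_le hM).1 (MD1Aux.integ_f (lam := lam) hD hM).1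
    have hcp := intervalIntegral.continuousOn_primitive_interval hio
    rwa [Set.uIcc_of_le hM] at hcp
  have hBint : ∀ M : ℝ, 0 ≤ M →
      IntervalIntegrable (fun x => PW lam D x * Real.exp (-μ * x)) MeasureTheory.volume 0 M := by
    intro M hM
    apply ContinuousOn.intervalIntegrable
    rw [Set.uIcc_of_le hM]
    exact (hPWcontM M hM).mul (Continuous.continuousOn (by fun_prop))
  -- integration by parts / FTC on [0, M]
  have parts : ∀ M : ℝ, 0 ≤ M →
      ∫ x in (0:ℝ)..M, (fW lam D x * Real.exp (-μ * x) -
          μ * (PW lam D x * Real.exp (-μ * x))) =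
        PW lam D M * Real.exp (-μ * M) - (1 - lam * D) := by
    intro M hM
    have hcont2 : ContinuousOn (fun w => PW lam D w * Real.exp (-μ * w)) (Set.Icc 0 M) :=
      (hPWcontM M hM).mul (Continuous.continuousOn (by fun_prop))
    have hder : ∀ x ∈ Set.Ioo 0 M, HasDerivWithinAt
        (fun w => PW lam D w * Real.exp (-μ * w))
        (fW lam D x * Real.exp (-μ * x) - μ * (PW lam D x * Real.exp (-μ * x)))
        (Set.Ioi x) x := by
      intro x hx
      have h1 : HasDerivWithinAt (PW lam D) (fW lam D x) (Set.Ioi x) x :=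
        MD1Aux.PW_hasDerivWithinAt hD hx.1.le
      have h2 : HasDerivAt (fun w => Real.exp (-μ * w)) (Real.exp (-μ * x) * (-μ)) x := by
        have h3 : HasDerivAt (fun w : ℝ => -μ * w) (-μ) x := by
          simpa using (hasDerivAt_id x).const_mul (-μ)
        simpa [mul_comm] using h3.exp
      have hmul := h1.fun_mul h2.hasDerivWithinAt
      exact hmul.congr_deriv (by ring)
    have hint : IntervalIntegrable
        (fun x => fW lam D x * Real.exp (-μ * x) - μ * (PW lam D x * Real.exp (-μ * x)))
        MeasureTheory.volume 0 M :=
      (hAint M hM).sub ((hBint M hM).const_mul μ)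
    have hF := intervalIntegral.integral_eq_sub_of_hasDeriv_right_of_le hM hcont2 hder hint
    rw [hF, MD1Aux.PW_zero]
    norm_num
  -- limits
  have T1 : Filter.Tendsto (fun M => ∫ x in (0:ℝ)..M, fW lam D x * Real.exp (-μ * x))
      Filter.atTop (nhds Jv) :=
    MeasureTheory.intervalIntegral_tendsto_integral_Ioi 0 hgint Filter.tendsto_id
  have T2 : Filter.Tendsto (fun M => ∫ x in (0:ℝ)..M, PW lam D x * Real.exp (-μ * x))
      Filter.atTop (nhds I) :=
    MeasureTheory.intervalIntegral_tendsto_integral_Ioi 0 hPWe_int Filter.tendsto_id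
  have TR : Filter.Tendsto (fun M => PW lam D M * Real.exp (-μ * M) - (1 - lam * D))
      Filter.atTop (nhds (0 - (1 - lam * D))) := by
    apply Filter.Tendsto.sub_const
    have hsq : Filter.Tendsto (fun M : ℝ => C * Real.exp (-(μ / 2) * M))
        Filter.atTop (nhds 0) := by
      have h1 : Filter.Tendsto (fun M : ℝ => μ / 2 * M) Filter.atTop Filter.atTop :=
        Filter.Tendsto.const_mul_atTop (by positivity) Filter.tendsto_id
      have h2 : Filter.Tendsto (fun M : ℝ => -(μ / 2 * M)) Filter.atTop Filter.atBot :=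
        Filter.tendsto_neg_atTop_atBot.comp h1
      have h3 : Filter.Tendsto (fun M : ℝ => Real.exp (-(μ / 2 * M))) Filter.atTop (nhds 0) :=
        Real.tendsto_exp_atBot.comp h2
      have h4 : (fun M : ℝ => C * Real.exp (-(μ / 2) * M)) =
          fun M : ℝ => C * Real.exp (-(μ / 2 * M)) := by
        funext M; congr 1; ring_nf
      rw [h4]
      simpa using h3.const_mul C
    apply squeeze_zero_norm' ?_ hsq
    filter_upwards [Filter.eventually_ge_atTop (0:ℝ)] with M hM
    rw [Real.norm_eq_abs]
    exact hdom M hM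
  have hev : (fun M => (∫ x in (0:ℝ)..M, fW lam D x * Real.exp (-μ * x)) -
      μ * ∫ x in (0:ℝ)..M, PW lam D x * Real.exp (-μ * x)) =ᶠ[Filter.atTop]
      (fun M => PW lam D M * Real.exp (-μ * M) - (1 - lam * D)) := by
    filter_upwards [Filter.eventually_ge_atTop (0:ℝ)] with M hM
    rw [← parts M hM, intervalIntegral.integral_sub (hAint M hM) ((hBint M hM).const_mul μ),
      intervalIntegral.integral_const_mul]
  have TL : Filter.Tendsto (fun M => (∫ x in (0:ℝ)..M, fW lam D x * Real.exp (-μ * x)) -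
      μ * ∫ x in (0:ℝ)..M, PW lam D x * Real.exp (-μ * x)) Filter.atTop
      (nhds (Jv - μ * I)) := T1.sub (T2.const_mul μ)
  have hEq2 : Jv - μ * I = 0 - (1 - lam * D) :=
    tendsto_nhds_unique (TL.congr' hev) TR
  -- solve the linear system
  have hepos := Real.exp_pos (μ * D)
  have hden : (0:ℝ) < (μ - lam) * Real.exp (μ * D) + lam := by nlinarith
  have hIval : I = (Jv + (1 - lam * D)) / μ := by
    rw [eq_div_iff hμ0.ne']
    linarith
  rw [hIval] at hEq1
  have hexpneg : Real.exp (-μ * D) = (Real.exp (μ * D))⁻¹ := by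
    rw [← Real.exp_neg]
    ring_nf
  rw [hexpneg] at hEq1
  have hJval : Jv = (1 - lam * D) * lam * (Real.exp (μ * D) - 1) /
      ((μ - lam) * Real.exp (μ * D) + lam) := by
    rw [eq_div_iff hden.ne']
    field_simp at hEq1
    rw [mul_comm D μ] at hEq1
    nlinarith [hEq1]
  rw [← hJval]
  exact T1
end

section
/- For every M > 0, one has ∫₀^M P_W(w) e^{−λw} dw = (1 − λD) · Σ_{k=0}^{⌊M/D⌋} (−λ)^k e^{−λkD} (M − kD)^{k+1} / (k+1)!. -/
open Real MeasureTheory Filter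

/-- `∫₀^M P_W(w) e^{-λ w} dw
= (1 - λD) Σ_{k=0}^{⌊M/D⌋} (-λ)^k e^{-λ k D} (M - kD)^{k+1} / (k+1)!`. -/
theorem md1_cdf_exp_integral (lam D : ℝ) (hlam : 0 < lam) (hD : 0 < D)
    (hstab : lam * D < 1) (M : ℝ) (hM : 0 < M) :
    ∫ w in (0:ℝ)..M, PW lam D w * Real.exp (-lam * w) =
      (1 - lam * D) * ∑ k ∈ Finset.range (⌊M / D⌋₊ + 1),
        (-lam) ^ k * Real.exp (-lam * (k : ℝ) * D) * (M - (k : ℝ) * D) ^ (k + 1) /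
          (Nat.factorial (k + 1)) := by
  set N := ⌊M / D⌋₊ with hN
  set c : ℕ → ℝ := fun k => (1 - lam * D) * ((-lam) ^ k * Real.exp (-lam * k * D) / (Nat.factorial k)) with hc
  set F : ℕ → ℝ → ℝ := fun k w => c k * (w - (k : ℝ) * D) ^ k with hF
  set G : ℕ → ℝ → ℝ := fun k => Set.indicator (Set.Ioi ((k : ℝ) * D)) (F k) with hG
  have hkDM : ∀ k ∈ Finset.range (N + 1), (k : ℝ) * D ≤ M := by
    intro k hk
    have hk' : (k : ℝ) ≤ N := by exact_mod_cast Nat.lt_succ_iff.mp (Finset.mem_range.mp hk)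
    have : (N : ℝ) ≤ M / D := Nat.floor_le (by positivity)
    calc (k : ℝ) * D ≤ (M / D) * D := by nlinarith
    _ = M := by field_simp
  -- integrand equality on Ioc 0 M
  have hptw : ∀ w ∈ Set.Ioc (0:ℝ) M,
      PW lam D w * Real.exp (-lam * w) = ∑ k ∈ Finset.range (N + 1), G k w := by
    intro w hw
    obtain ⟨hw0, hwM⟩ := hw
    have hwD : 0 ≤ w / D := by positivity
    have hfl : ⌊w / D⌋₊ + 1 ≤ N + 1 := by
      have : w / D ≤ M / D := by gcongr
      exact Nat.succ_le_succ (Nat.floor_mono this)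
    have hsub : Finset.range (⌊w / D⌋₊ + 1) ⊆ Finset.range (N + 1) := Finset.range_subset_range.mpr hfl
    have hzero : ∀ k ∈ Finset.range (N + 1), k ∉ Finset.range (⌊w / D⌋₊ + 1) → G k w = 0 := by
      intro k _ hk
      have hk' : ⌊w / D⌋₊ < k := by
        simp only [Finset.mem_range] at hk; omega
      have : w / D < k := (Nat.floor_lt hwD).mp hk'
      have hwk : w < (k : ℝ) * D := by
        calc w = (w / D) * D := by field_simp
        _ < (k : ℝ) * D := by nlinarith
      simp only [hG, Set.indicator_apply_eq_zero, Set.mem_Ioi]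
      intro h; linarith
    have hmem : ∀ k ∈ Finset.range (⌊w / D⌋₊ + 1), G k w = F k w := by
      intro k hk
      have hk' : (k : ℝ) ≤ w / D := by
        have := Nat.lt_succ_iff.mp (Finset.mem_range.mp hk)
        exact_mod_cast le_trans (Nat.cast_le.mpr this) (Nat.floor_le hwD)
      have hkw : (k : ℝ) * D ≤ w := by
        calc (k : ℝ) * D ≤ (w / D) * D := by nlinarith
        _ = w := by field_simp
      rcases lt_or_eq_of_le hkw with h | h
      · simp [hG, Set.indicator_of_mem, Set.mem_Ioi, h]
      · -- w = k*D, so k ≥ 1 and F k w = 0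
        have hk0 : k ≠ 0 := by
          rintro rfl; simp at h; linarith
        have hFk : F k w = 0 := by
          simp [hF, ← h, zero_pow hk0]
        have : G k w = 0 := by
          simp only [hG, Set.indicator_apply_eq_zero, Set.mem_Ioi]
          intro h'; linarith [h'.le, h.le]
        rw [this, hFk]
    rw [← Finset.sum_subset hsub hzero, Finset.sum_congr rfl hmem]
    -- now prove PW * exp = Σ F
    rw [PW, if_neg (by linarith), mul_assoc, Finset.sum_mul, Finset.mul_sum]
    apply Finset.sum_congr rfl
    intro k _
    simp only [hF, hc]
    have hexp : Real.exp (lam * (w - (k:ℝ)*D)) * Real.exp (-lam * w)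
        = Real.exp (-lam * (k:ℝ) * D) := by
      rw [← Real.exp_add]; ring_nf
    rw [show (-(lam * (w - (k:ℝ)*D))) = (-lam) * (w - (k:ℝ)*D) by ring, mul_pow]
    linear_combination ((1 - lam*D) * (-lam)^k * (w - (k:ℝ)*D)^k / (Nat.factorial k : ℝ)) * hexp
  -- integrability of each G k
  have hFcont : ∀ k, Continuous (F k) := by
    intro k; fun_prop
  have hGint : ∀ (k : ℕ) (a b : ℝ), IntervalIntegrable (G k) volume a b := by
    intro k a b
    rw [intervalIntegrable_iff]
    exact (((hFcont k).integrableOn_uIoc)).indicator measurableSet_Ioi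
  have hmain : ∫ w in (0:ℝ)..M, PW lam D w * Real.exp (-lam * w)
      = ∑ k ∈ Finset.range (N + 1), ∫ w in (0:ℝ)..M, G k w := by
    rw [← intervalIntegral.integral_finset_sum (fun k _ => hGint k 0 M)]
    apply intervalIntegral.integral_congr_ae
    filter_upwards with w hw
    rw [Set.uIoc_of_le hM.le] at hw
    exact hptw w hw
  rw [hmain]
  rw [Finset.mul_sum]
  apply Finset.sum_congr rfl
  intro k hk
  have hkM : (k : ℝ) * D ≤ M := hkDM k hk
  have hkD0 : (0:ℝ) ≤ (k : ℝ) * D := by positivity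
  -- ∫₀^M G k = ∫_{kD}^M F k
  have hsplit : ∫ w in (0:ℝ)..M, G k w
      = (∫ w in (0:ℝ)..((k:ℝ)*D), G k w) + ∫ w in ((k:ℝ)*D)..M, G k w :=
    (intervalIntegral.integral_add_adjacent_intervals (hGint k 0 _) (hGint k _ M)).symm
  have hzero1 : (∫ w in (0:ℝ)..((k:ℝ)*D), G k w) = 0 := by
    rw [intervalIntegral.integral_congr (g := fun _ => (0:ℝ)), intervalIntegral.integral_const, smul_zero]
    intro w hw
    rw [Set.uIcc_of_le hkD0] at hw
    simp only [hG, Set.indicator_apply_eq_zero, Set.mem_Ioi]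
    intro h; linarith [hw.2]
  have heq2 : (∫ w in ((k:ℝ)*D)..M, G k w) = ∫ w in ((k:ℝ)*D)..M, F k w := by
    apply intervalIntegral.integral_congr_ae
    filter_upwards with w hw
    rw [Set.uIoc_of_le hkM] at hw
    simp [hG, Set.indicator_of_mem, Set.mem_Ioi, hw.1]
  rw [hsplit, hzero1, heq2, zero_add]
  -- compute ∫_{kD}^M F k
  have : (∫ w in ((k:ℝ)*D)..M, F k w) = c k * ((M - (k:ℝ)*D) ^ (k+1) / (k+1)) := by
    simp only [hF]
    rw [intervalIntegral.integral_const_mul]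
    have := intervalIntegral.integral_comp_sub_right (a := (k:ℝ)*D) (b := M) (fun x => x ^ k) ((k:ℝ)*D)
    rw [this, integral_pow]
    simp
  rw [this, hc]
  rw [Nat.factorial_succ]
  push_cast
  field_simp
end

section
/- For every x > 0, ∫₀^x (μ₁ + α₂) e^{−(μ₁+α₂)s} · (α₂ μ₂ / λ) · ( e^{−α₂(x−s)} − e^{−μ₂(x−s)} ) ds = ( α₂ μ₂ (α₂ + μ₁) / (λ α₁ μ₁) ) · e^{−α₂ x} ( α₁ + λ e^{−μ₁ x} − μ₁ e^{−λ x} ). -/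
open Real MeasureTheory

/-- unconditioning integral giving the case-A conditional
system-time density `p_{T|Ω₁,A}(t|ω₁)` of the M/M/1 – M/M/1 tandem,
written in terms of `x = t - ω₁ > 0`. -/
theorem mm1_tandem_caseA_conditional_density (lam μ₁ μ₂ α₁ α₂ : ℝ) (hlam : 0 < lam)
    (hμ₁ : lam < μ₁) (hμ₂ : lam < μ₂) (hα₁ : α₁ = μ₁ - lam) (hα₂ : α₂ = μ₂ - lam)
    (x : ℝ) (hx : 0 < x) :
    ∫ s in (0:ℝ)..x, (μ₁ + α₂) * Real.exp (-(μ₁ + α₂) * s) * (α₂ * μ₂ / lam) *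
        (Real.exp (-α₂ * (x - s)) - Real.exp (-μ₂ * (x - s))) =
      α₂ * μ₂ * (α₂ + μ₁) / (lam * α₁ * μ₁) * Real.exp (-α₂ * x) *
        (α₁ + lam * Real.exp (-μ₁ * x) - μ₁ * Real.exp (-lam * x)) := by
  subst hα₁ hα₂
  have hlam0 : lam ≠ 0 := ne_of_gt hlam
  have hμ₁0 : μ₁ ≠ 0 := by linarith
  have hα₁0 : μ₁ - lam ≠ 0 := by linarith
  have hα₂0 : μ₂ - lam ≠ 0 := by linarith
  set K : ℝ := (μ₁ + (μ₂ - lam)) * ((μ₂ - lam) * μ₂ / lam) with hK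
  set F : ℝ → ℝ := fun s =>
    K * (-(Real.exp (-(μ₂ - lam) * x) * Real.exp (-μ₁ * s)) / μ₁
      + Real.exp (-μ₂ * x) * Real.exp (-(μ₁ - lam) * s) / (μ₁ - lam)) with hF
  have hderiv : ∀ s ∈ Set.uIcc (0:ℝ) x, HasDerivAt F
      ((μ₁ + (μ₂ - lam)) * Real.exp (-(μ₁ + (μ₂ - lam)) * s) * ((μ₂ - lam) * μ₂ / lam) *
        (Real.exp (-(μ₂ - lam) * (x - s)) - Real.exp (-μ₂ * (x - s)))) s := by
    intro s _
    have h1 : HasDerivAt (fun s : ℝ => Real.exp (-μ₁ * s))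
        (Real.exp (-μ₁ * s) * (-μ₁)) s := by
      simpa using ((hasDerivAt_id s).const_mul (-μ₁)).exp
    have h2 : HasDerivAt (fun s : ℝ => Real.exp (-(μ₁ - lam) * s))
        (Real.exp (-(μ₁ - lam) * s) * (-(μ₁ - lam))) s := by
      simpa using ((hasDerivAt_id s).const_mul (-(μ₁ - lam))).exp
    have h : HasDerivAt F
        (K * (-(Real.exp (-(μ₂ - lam) * x) * (Real.exp (-μ₁ * s) * (-μ₁))) / μ₁
          + Real.exp (-μ₂ * x) * (Real.exp (-(μ₁ - lam) * s) * (-(μ₁ - lam))) / (μ₁ - lam))) s := by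
      exact ((((h1.const_mul (Real.exp (-(μ₂ - lam) * x))).neg.div_const μ₁).add
        ((h2.const_mul (Real.exp (-μ₂ * x))).div_const (μ₁ - lam))).const_mul K)
    convert h using 1
    have g1 : Real.exp (-(μ₁ + (μ₂ - lam)) * s) * Real.exp (-(μ₂ - lam) * (x - s))
        = Real.exp (-(μ₂ - lam) * x) * Real.exp (-μ₁ * s) := by
      rw [← Real.exp_add, ← Real.exp_add]; ring_nf
    have g2 : Real.exp (-(μ₁ + (μ₂ - lam)) * s) * Real.exp (-μ₂ * (x - s))
        = Real.exp (-μ₂ * x) * Real.exp (-(μ₁ - lam) * s) := by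
      rw [← Real.exp_add, ← Real.exp_add]; ring_nf
    have d1 : -(Real.exp (-(μ₂ - lam) * x) * (Real.exp (-μ₁ * s) * -μ₁)) / μ₁
        = Real.exp (-(μ₂ - lam) * x) * Real.exp (-μ₁ * s) := by
      rw [div_eq_iff hμ₁0]; ring
    have d2 : Real.exp (-μ₂ * x) * (Real.exp (-(μ₁ - lam) * s) * -(μ₁ - lam)) / (μ₁ - lam)
        = -(Real.exp (-μ₂ * x) * Real.exp (-(μ₁ - lam) * s)) := by
      rw [div_eq_iff hα₁0]; ring
    rw [d1, d2, ← g1, ← g2]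
    ring
  have hcont : IntervalIntegrable
      (fun s => (μ₁ + (μ₂ - lam)) * Real.exp (-(μ₁ + (μ₂ - lam)) * s) * ((μ₂ - lam) * μ₂ / lam) *
        (Real.exp (-(μ₂ - lam) * (x - s)) - Real.exp (-μ₂ * (x - s))))
      MeasureTheory.volume 0 x := by
    apply Continuous.intervalIntegrable
    continuity
  rw [intervalIntegral.integral_eq_sub_of_hasDerivAt hderiv hcont]
  simp only [hF]
  have e6 : Real.exp (-μ₂ * x) = Real.exp (-(μ₂ - lam) * x) * Real.exp (-lam * x) := by
    rw [← Real.exp_add]; ring_nf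
  have e7 : Real.exp (-(μ₁ - lam) * x) * Real.exp (-lam * x) = Real.exp (-μ₁ * x) := by
    rw [← Real.exp_add]; ring_nf
  rw [e6, ← e7, hK]
  field_simp
  ring_nf
  simp only [Real.exp_zero, mul_one]
  ring
end

section
/- Assume in addition μ₁ ≠ μ₂ and μ₂ ≠ α₁. Then ∫₀^∞ λ e^{−α₁ t} [ 1 − e^{−μ₂ t} + α₁ μ₂ (1 − e^{−λ t})/(λ(μ₂ − μ₁)) − α₂ μ₂ (1 − e^{−(μ₂ − α₁) t})/((μ₂ − μ₁)(μ₂ − α₁)) ] dt = λ α₂ / ( μ₁ (μ₁ + α₂) ). Equivalently, the case-B system-time density p_{T|B}(t) = (λ e^{−α₁ t}/p(B)) · [bracket](t), with p(B) = λα₂/(μ₁(μ₁+α₂)), integrates to one over (0, ∞). -/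
open Real MeasureTheory

lemma my_exp_integrable {b : ℝ} (hb : 0 < b) :
    IntegrableOn (fun t : ℝ => Real.exp (-b * t)) (Set.Ioi (0:ℝ)) :=
  exp_neg_integrableOn_Ioi 0 hb

lemma my_exp_integral {b : ℝ} (hb : 0 < b) :
    ∫ t in Set.Ioi (0:ℝ), Real.exp (-b * t) = 1 / b := by
  have h := integral_comp_mul_left_Ioi (fun x : ℝ => Real.exp (-x)) 0 hb
  simp only [mul_zero, integral_exp_neg_Ioi_zero, smul_eq_mul, mul_one] at h
  rw [show (fun t : ℝ => Real.exp (-b * t)) = fun t : ℝ => Real.exp (-(b * t)) by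
    funext t; ring_nf]
  rw [h, one_div]

/-- the case-B system-time density of the M/M/1 – M/M/1 tandem
integrates to one; equivalently, the integral of `λ e^{-α₁ t}` times the bracket
equals `λ α₂ / (μ₁ (μ₁ + α₂))`. -/
theorem mm1_tandem_caseB_density_normalized (lam μ₁ μ₂ α₁ α₂ : ℝ) (hlam : 0 < lam)
    (hμ₁ : lam < μ₁) (hμ₂ : lam < μ₂) (hα₁ : α₁ = μ₁ - lam) (hα₂ : α₂ = μ₂ - lam)
    (hne : μ₁ ≠ μ₂) (hne' : μ₂ ≠ α₁) :
    ∫ t in Set.Ioi (0:ℝ),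
        lam * Real.exp (-α₁ * t) *
          (1 - Real.exp (-μ₂ * t) +
            α₁ * μ₂ * (1 - Real.exp (-lam * t)) / (lam * (μ₂ - μ₁)) -
            α₂ * μ₂ * (1 - Real.exp (-(μ₂ - α₁) * t)) / ((μ₂ - μ₁) * (μ₂ - α₁))) =
      lam * α₂ / (μ₁ * (μ₁ + α₂)) := by
  have hα₁pos : 0 < α₁ := by rw [hα₁]; linarith
  have hμ₁pos : 0 < μ₁ := lt_trans hlam hμ₁
  have hμ₂pos : 0 < μ₂ := lt_trans hlam hμ₂
  have hsum : 0 < α₁ + μ₂ := by linarith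
  have hd : μ₂ - μ₁ ≠ 0 := sub_ne_zero.mpr (Ne.symm hne)
  have he : μ₂ - α₁ ≠ 0 := sub_ne_zero.mpr hne'
  set c2 : ℝ := lam * α₁ * μ₂ / (lam * (μ₂ - μ₁)) with hc2
  set c3 : ℝ := lam * α₂ * μ₂ / ((μ₂ - μ₁) * (μ₂ - α₁)) with hc3
  have hptwise : ∀ t ∈ Set.Ioi (0:ℝ),
      lam * Real.exp (-α₁ * t) *
          (1 - Real.exp (-μ₂ * t) +
            α₁ * μ₂ * (1 - Real.exp (-lam * t)) / (lam * (μ₂ - μ₁)) -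
            α₂ * μ₂ * (1 - Real.exp (-(μ₂ - α₁) * t)) / ((μ₂ - μ₁) * (μ₂ - α₁)))
        = (lam + c2 - c3) * Real.exp (-α₁ * t) + (-lam) * Real.exp (-(α₁ + μ₂) * t)
          + (-c2) * Real.exp (-μ₁ * t) + c3 * Real.exp (-μ₂ * t) := by
    intro t _
    have e1 : Real.exp (-(α₁ + μ₂) * t) = Real.exp (-α₁ * t) * Real.exp (-μ₂ * t) := by
      rw [← Real.exp_add]; ring_nf
    have e2 : Real.exp (-μ₁ * t) = Real.exp (-α₁ * t) * Real.exp (-lam * t) := by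
      rw [← Real.exp_add, hα₁]; ring_nf
    have e3 : Real.exp (-μ₂ * t) = Real.exp (-α₁ * t) * Real.exp (-(μ₂ - α₁) * t) := by
      rw [← Real.exp_add]; ring_nf
    rw [e1, e2, hc2, hc3]
    nth_rewrite 3 [e3]
    field_simp
    ring
  rw [setIntegral_congr_fun measurableSet_Ioi hptwise]
  have i1 := (my_exp_integrable hα₁pos).const_mul (lam + c2 - c3)
  have i2 := (my_exp_integrable hsum).const_mul (-lam)
  have i3 := (my_exp_integrable hμ₁pos).const_mul (-c2)
  have i4 := (my_exp_integrable hμ₂pos).const_mul c3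
  have i12 : Integrable (fun x : ℝ => (lam + c2 - c3) * Real.exp (-α₁ * x)
      + (-lam) * Real.exp (-(α₁ + μ₂) * x)) (volume.restrict (Set.Ioi 0)) := i1.add i2
  have i123 : Integrable (fun x : ℝ => (lam + c2 - c3) * Real.exp (-α₁ * x)
      + (-lam) * Real.exp (-(α₁ + μ₂) * x) + (-c2) * Real.exp (-μ₁ * x))
      (volume.restrict (Set.Ioi 0)) := i12.add i3
  rw [integral_add i123 i4, integral_add i12 i3, integral_add i1 i2,
    integral_const_mul, integral_const_mul, integral_const_mul,
    integral_const_mul, my_exp_integral hα₁pos, my_exp_integral hsum,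
    my_exp_integral hμ₁pos, my_exp_integral hμ₂pos, hc2, hc3]
  subst hα₁ hα₂
  have h1 : μ₁ - lam ≠ 0 := by positivity
  have h2 : μ₁ - lam + μ₂ ≠ 0 := by positivity
  have h3 : μ₁ + (μ₂ - lam) ≠ 0 := by intro h; linarith
  field_simp
  ring
end

section
/- For every M > 0, one has ∫₀^M P_W(w) dw = ((1 − λD)/λ) · Σ_{k=0}^{⌊M/D⌋} ( e^{λ(M−kD)} · Σ_{i=0}^{k} (−λ(M−kD))^i / i! − 1 ). -/
open Real MeasureTheory Filter

lemma aux_deriv (a : ℝ) (k : ℕ) (x : ℝ) :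
    HasDerivAt (fun x => Real.exp (a*x) * ∑ i ∈ Finset.range (k+1), (-(a*x))^i / (Nat.factorial i))
      (a * ((-(a*x))^k / (Nat.factorial k)) * Real.exp (a*x)) x := by
  induction k with
  | zero =>
      have h : HasDerivAt (fun x => Real.exp (a*x)) (a * Real.exp (a*x)) x := by
        simpa [mul_comm] using ((hasDerivAt_id x).const_mul a).exp
      simpa using h.congr_deriv (by ring) |>.congr_of_eventuallyEq
        (Filter.Eventually.of_forall (fun y => by simp))
  | succ k ih =>
      have hneg : HasDerivAt (fun x : ℝ => -(a*x)) (-a) x := by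
        exact (((hasDerivAt_id x).const_mul a).neg).congr_deriv (by ring)
      have hpow : HasDerivAt (fun x : ℝ => (-(a*x))^(k+1))
          ((k+1 : ℕ) * (-(a*x))^k * (-a)) x := hneg.pow (k+1)
      have hexp : HasDerivAt (fun x => Real.exp (a*x)) (a * Real.exp (a*x)) x := by
        simpa [mul_comm] using ((hasDerivAt_id x).const_mul a).exp
      have hterm : HasDerivAt (fun x => Real.exp (a*x) * ((-(a*x))^(k+1) / (Nat.factorial (k+1))))
          (a * Real.exp (a*x) * ((-(a*x))^(k+1) / (Nat.factorial (k+1)))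
            + Real.exp (a*x) * (((k+1 : ℕ) * (-(a*x))^k * (-a)) / (Nat.factorial (k+1)))) x :=
        hexp.mul (hpow.div_const _)
      have hsum := ih.add hterm
      have hfun : (fun x => Real.exp (a*x) * ∑ i ∈ Finset.range (k+1+1), (-(a*x))^i / (Nat.factorial i))
          = (fun x => (Real.exp (a*x) * ∑ i ∈ Finset.range (k+1), (-(a*x))^i / (Nat.factorial i))
              + Real.exp (a*x) * ((-(a*x))^(k+1) / (Nat.factorial (k+1)))) := by
        funext y; rw [Finset.sum_range_succ, mul_add]
      rw [hfun]
      refine hsum.congr_deriv ?_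
      have hf : (Nat.factorial (k+1) : ℝ) = (k+1) * (Nat.factorial k) := by
        push_cast [Nat.factorial_succ]; ring
      have hk : (Nat.factorial k : ℝ) ≠ 0 := by positivity
      have hk1 : ((k:ℝ)+1) ≠ 0 := by positivity
      rw [hf]
      field_simp
      push_cast
      ring

lemma aux_integral (a : ℝ) (ha : 0 < a) (c M : ℝ) (k : ℕ) :
    ∫ w in c..M, (-(a*(w-c)))^k * Real.exp (a*(w-c)) / (Nat.factorial k)
      = (1/a) * (Real.exp (a*(M-c)) * ∑ i ∈ Finset.range (k+1),
          (-(a*(M-c)))^i / (Nat.factorial i) - 1) := by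
  have hF : ∀ x : ℝ, HasDerivAt
      (fun w => (1/a) * (Real.exp (a*(w-c)) * ∑ i ∈ Finset.range (k+1), (-(a*(w-c)))^i / (Nat.factorial i)))
      ((-(a*(x-c)))^k * Real.exp (a*(x-c)) / (Nat.factorial k)) x := by
    intro x
    have hsub : HasDerivAt (fun w : ℝ => w - c) 1 x := (hasDerivAt_id x).sub_const c
    have h := (aux_deriv a k (x - c)).comp x hsub
    have h2 := h.const_mul (1/a)
    refine h2.congr_deriv ?_
    field_simp
  have hcont : Continuous fun w => (-(a*(w-c)))^k * Real.exp (a*(w-c)) / (Nat.factorial k) := by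
    fun_prop
  rw [intervalIntegral.integral_eq_sub_of_hasDerivAt (fun x _ => hF x)
    (hcont.intervalIntegrable _ _)]
  simp [Finset.sum_range_succ']
  ring


lemma ind_int (c M : ℝ) (h0 : 0 ≤ c) (hcM : c ≤ M) (g : ℝ → ℝ) (hg : Continuous g) :
    ∫ w in (0:ℝ)..M, Set.indicator (Set.Ici c) g w = ∫ w in c..M, g w := by
  have hint : ∀ u v : ℝ, IntervalIntegrable (Set.indicator (Set.Ici c) g) volume u v := by
    intro u v
    rw [intervalIntegrable_iff]
    exact (hg.integrableOn_uIoc).indicator measurableSet_Ici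
  have h2 : ∫ w in c..M, Set.indicator (Set.Ici c) g w = ∫ w in c..M, g w := by
    apply intervalIntegral.integral_congr
    intro x hx
    rw [Set.uIcc_of_le hcM] at hx
    exact Set.indicator_of_mem (Set.mem_Ici.mpr hx.1) g
  have h1 : ∫ w in (0:ℝ)..c, Set.indicator (Set.Ici c) g w = 0 := by
    rw [intervalIntegral.integral_of_le h0]
    have hc : ∀ᵐ x : ℝ, x ≠ c := by
      rw [MeasureTheory.ae_iff]
      simpa using measure_singleton c
    have : ∫ x in Set.Ioc (0:ℝ) c, Set.indicator (Set.Ici c) g x = ∫ x in Set.Ioc (0:ℝ) c, (0:ℝ) := by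
      apply MeasureTheory.setIntegral_congr_ae measurableSet_Ioc
      filter_upwards [hc] with x hx hmem
      exact Set.indicator_of_notMem (by simp only [Set.mem_Ici, not_le]; exact lt_of_le_of_ne hmem.2 hx) g
    simp [this]
  rw [← intervalIntegral.integral_add_adjacent_intervals (hint 0 c) (hint c M), h1, h2, zero_add]

lemma ind_intable (c u v : ℝ) (g : ℝ → ℝ) (hg : Continuous g) :
    IntervalIntegrable (Set.indicator (Set.Ici c) g) volume u v := by
  rw [intervalIntegrable_iff]
  exact (hg.integrableOn_uIoc).indicator measurableSet_Ici

/-- `∫₀^M P_W(w) dw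
= ((1 - λD)/λ) Σ_{k=0}^{⌊M/D⌋} ( e^{λ(M - kD)} Σ_{i=0}^{k} (-λ(M - kD))^i / i! - 1 )`. -/
theorem md1_cdf_integral (lam D : ℝ) (hlam : 0 < lam) (hD : 0 < D)
    (hstab : lam * D < 1) (M : ℝ) (hM : 0 < M) :
    ∫ w in (0:ℝ)..M, PW lam D w =
      ((1 - lam * D) / lam) * ∑ k ∈ Finset.range (⌊M / D⌋₊ + 1),
        (Real.exp (lam * (M - (k : ℝ) * D)) *
            ∑ i ∈ Finset.range (k + 1),
              (-(lam * (M - (k : ℝ) * D))) ^ i / (Nat.factorial i) - 1) := by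
  set n := ⌊M / D⌋₊ with hn
  set g : ℕ → ℝ → ℝ := fun k w =>
    (1 - lam * D) * ((-(lam * (w - (k : ℝ) * D))) ^ k * Real.exp (lam * (w - (k : ℝ) * D)) /
      (Nat.factorial k)) with hg
  have hgcont : ∀ k, Continuous (g k) := by intro k; fun_prop
  have hiff : ∀ (k : ℕ) (w : ℝ), 0 ≤ w → ((k : ℝ) * D ≤ w ↔ k ≤ ⌊w / D⌋₊) := by
    intro k w hw
    rw [Nat.le_floor_iff (by positivity), le_div_iff₀ hD]
  have key : ∀ w ∈ Set.uIcc (0:ℝ) M, PW lam D w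
      = ∑ k ∈ Finset.range (n+1), Set.indicator (Set.Ici ((k:ℝ)*D)) (g k) w := by
    intro w hw
    rw [Set.uIcc_of_le hM.le] at hw
    obtain ⟨hw0, hwM⟩ := hw
    have hmn : ⌊w / D⌋₊ ≤ n := Nat.floor_mono (by gcongr)
    symm
    calc ∑ k ∈ Finset.range (n+1), Set.indicator (Set.Ici ((k:ℝ)*D)) (g k) w
        = ∑ k ∈ Finset.range (n+1), (if k ∈ Finset.range (⌊w / D⌋₊ + 1) then g k w else 0) := by
          apply Finset.sum_congr rfl
          intro k hk
          rw [Set.indicator_apply]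
          exact if_congr (by rw [Set.mem_Ici, Finset.mem_range, Nat.lt_succ_iff]; exact hiff k w hw0) rfl rfl
      _ = ∑ k ∈ Finset.range (n+1) ∩ Finset.range (⌊w / D⌋₊ + 1), g k w := by
          rw [Finset.sum_ite_mem]
      _ = ∑ k ∈ Finset.range (⌊w / D⌋₊ + 1), g k w := by
          rw [Finset.inter_eq_right.mpr (Finset.range_subset_range.mpr (by omega))]
      _ = PW lam D w := by
          rw [PW, if_neg (not_lt.mpr hw0), Finset.mul_sum]
  rw [intervalIntegral.integral_congr key]
  rw [intervalIntegral.integral_finset_sum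
    (fun k _ => ind_intable _ _ _ _ (hgcont k))]
  have hkD : ∀ k ∈ Finset.range (n+1), (0:ℝ) ≤ (k:ℝ)*D ∧ (k:ℝ)*D ≤ M := by
    intro k hk
    rw [Finset.mem_range, Nat.lt_succ_iff] at hk
    constructor
    · positivity
    · have : (k:ℝ) ≤ M / D := (Nat.le_floor_iff (by positivity)).mp hk
      calc (k:ℝ)*D ≤ (M/D)*D := by gcongr
        _ = M := by field_simp
  have hstep : ∀ k ∈ Finset.range (n+1),
      ∫ w in (0:ℝ)..M, Set.indicator (Set.Ici ((k:ℝ)*D)) (g k) w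
        = ((1 - lam * D) / lam) * (Real.exp (lam * (M - (k : ℝ) * D)) *
            ∑ i ∈ Finset.range (k + 1),
              (-(lam * (M - (k : ℝ) * D))) ^ i / (Nat.factorial i) - 1) := by
    intro k hk
    obtain ⟨h1, h2⟩ := hkD k hk
    rw [ind_int _ _ h1 h2 _ (hgcont k), hg]
    simp only
    rw [intervalIntegral.integral_const_mul, aux_integral lam hlam ((k:ℝ)*D) M k]
    ring
  rw [Finset.sum_congr rfl hstep, ← Finset.mul_sum]
end
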